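/- arXiv:2108.11192 — 6 statements merged into one kernel-verified Lean document; each statement's English description precedes it below -/
import Mathlib

section
/- For every function g in H^1(ℝ^d) (d ≥ 2) and all radii 0 ≤ R₁ ≤ R₂, the integral of g² over the annulus {x : R₁ ≤ |x| ≤ R₂} is at most 2(R₂ − R₁) times the product of the L² norm of g and the L² norm of ∇g. -/
open MeasureTheory Metric Set


lemma key1D (u v : ℝ → ℝ) (hu : Differentiable ℝ u)
    (hv : Measurable v) (hv0 : ∀ s, 0 ≤ v s)
    (hbound : ∀ s, |deriv u s| ≤ v s) (n : ℕ) {r : ℝ} (hr : 0 < r)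
    (hI1 : IntegrableOn (fun s => s ^ n * (|u s| * v s)) (Ioi 0))
    (hI2 : IntegrableOn (fun s => s ^ n * u s ^ 2) (Ioi 0)) :
    r ^ n * u r ^ 2 ≤ 2 * ∫ s in Ioi (0:ℝ), s ^ n * (|u s| * v s) := by
  have hrn : (0:ℝ) < r ^ n := pow_pos hr n
  have hucont : Continuous u := hu.continuous
  have hmeas_uv : AEStronglyMeasurable (fun s => |u s| * v s) (volume.restrict (Ioi r)) :=
    ((hucont.measurable.abs.mul hv).aestronglyMeasurable)
  -- integrability of |u| * v on Ioi r
  have huv : IntegrableOn (fun s => |u s| * v s) (Ioi r) := by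
    refine Integrable.mono' ((hI1.mono_set (Ioi_subset_Ioi hr.le)).const_mul ((r ^ n)⁻¹))
      hmeas_uv ?_
    filter_upwards [ae_restrict_mem measurableSet_Ioi] with s hs
    have hs0 : 0 < s := hr.trans hs
    have h1 : 0 ≤ |u s| * v s := mul_nonneg (abs_nonneg _) (hv0 s)
    rw [Real.norm_eq_abs, abs_of_nonneg h1]
    have hle : r ^ n * (|u s| * v s) ≤ s ^ n * (|u s| * v s) :=
      mul_le_mul_of_nonneg_right (pow_le_pow_left₀ hr.le hs.le n) h1
    calc |u s| * v s = (r ^ n)⁻¹ * (r ^ n * (|u s| * v s)) := by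
          rw [inv_mul_cancel_left₀ hrn.ne']
      _ ≤ (r ^ n)⁻¹ * (s ^ n * (|u s| * v s)) :=
          mul_le_mul_of_nonneg_left hle (inv_nonneg.mpr hrn.le)
  -- integrability of u * u' on Ioi r
  have huu' : IntegrableOn (fun s => u s * deriv u s) (Ioi r) := by
    refine Integrable.mono' huv
      (hucont.measurable.mul (measurable_deriv u)).aestronglyMeasurable ?_
    filter_upwards [] with s
    rw [Real.norm_eq_abs, abs_mul]
    exact mul_le_mul_of_nonneg_left (hbound s) (abs_nonneg _)
  -- FTC
  have hftc : ∀ s, r ≤ s → u s ^ 2 - u r ^ 2 = ∫ t in r..s, 2 * (u t * deriv u t) := by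
    intro s hs
    refine (intervalIntegral.integral_eq_sub_of_hasDerivAt (f := fun t => u t ^ 2) (fun t _ => ?_) ?_).symm
    · have h1 : HasDerivAt u (deriv u t) t := (hu t).hasDerivAt
      have h2 : HasDerivAt (fun t => u t ^ 2) (((2:ℕ):ℝ) * u t ^ (2 - 1) * deriv u t) t := h1.pow 2
      simpa [pow_one, mul_comm, mul_assoc, mul_left_comm] using h2
    · rw [intervalIntegrable_iff_integrableOn_Ioc_of_le hs]
      exact (huu'.mono_set Ioc_subset_Ioi_self).const_mul 2
  -- bound using a point far away
  have habs : ∀ s, r ≤ s → u r ^ 2 ≤ u s ^ 2 + 2 * ∫ t in Ioi r, |u t| * v t := by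
    intro s hs
    have e0 : |∫ t in r..s, 2 * (u t * deriv u t)| ≤ ∫ t in r..s, |2 * (u t * deriv u t)| :=
      intervalIntegral.abs_integral_le_integral_abs hs
    have e1 : ∫ t in r..s, |2 * (u t * deriv u t)| = ∫ t in Ioc r s, |2 * (u t * deriv u t)| :=
      intervalIntegral.integral_of_le hs
    have h2i : IntegrableOn (fun t => |2 * (u t * deriv u t)|) (Ioc r s) :=
      ((huu'.mono_set Ioc_subset_Ioi_self).const_mul 2).abs
    have h2i' : IntegrableOn (fun t => 2 * (|u t| * v t)) (Ioc r s) :=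
      (huv.mono_set Ioc_subset_Ioi_self).const_mul 2
    have e2 : ∫ t in Ioc r s, |2 * (u t * deriv u t)| ≤ ∫ t in Ioc r s, 2 * (|u t| * v t) := by
      refine setIntegral_mono_on h2i h2i' measurableSet_Ioc fun t _ => ?_
      rw [abs_mul, abs_mul, abs_two]
      exact mul_le_mul_of_nonneg_left
        (mul_le_mul_of_nonneg_left (hbound t) (abs_nonneg _)) (by norm_num)
    have e3 : ∫ t in Ioc r s, 2 * (|u t| * v t) ≤ ∫ t in Ioi r, 2 * (|u t| * v t) := by
      refine setIntegral_mono_set (huv.const_mul 2) ?_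
        (HasSubset.Subset.eventuallyLE Ioc_subset_Ioi_self)
      filter_upwards [] with t
      exact mul_nonneg (by norm_num) (mul_nonneg (abs_nonneg _) (hv0 t))
    have e4 : ∫ t in Ioi r, 2 * (|u t| * v t) = 2 * ∫ t in Ioi r, |u t| * v t :=
      integral_const_mul 2 _
    have h3 := hftc s hs
    have h4 : -(∫ t in r..s, |2 * (u t * deriv u t)|) ≤ ∫ t in r..s, 2 * (u t * deriv u t) :=
      neg_le_of_abs_le e0
    linarith
  -- there are far away points where u is small
  have hsmall : ∀ ε > 0, ∃ s, r ≤ s ∧ u s ^ 2 < ε := by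
    intro ε hε
    by_contra hcon
    push_neg at hcon
    set M := max r 1 with hM
    have hM0 : (0:ℝ) < M := lt_of_lt_of_le hr (le_max_left _ _)
    have hIM : IntegrableOn (fun s => s ^ n * u s ^ 2) (Ioi M) :=
      hI2.mono_set (Ioi_subset_Ioi hM0.le)
    have hconst : IntegrableOn (fun _ => ε) (Ioi M) := by
      refine hIM.mono' aestronglyMeasurable_const ?_
      filter_upwards [ae_restrict_mem measurableSet_Ioi] with s hs
      have h1 : (1:ℝ) ≤ s := le_trans (le_max_right r 1) hs.le
      have h2 : ε ≤ u s ^ 2 := hcon s (le_trans (le_max_left r 1) hs.le)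
      have h3 : (1:ℝ) ≤ s ^ n := one_le_pow₀ h1
      calc ‖ε‖ = ε := by rw [Real.norm_eq_abs, abs_of_pos hε]
        _ ≤ u s ^ 2 := h2
        _ = 1 * u s ^ 2 := (one_mul _).symm
        _ ≤ s ^ n * u s ^ 2 := mul_le_mul_of_nonneg_right h3 (sq_nonneg _)
    rcases (integrable_const_iff).mp hconst with h0 | hfin
    · exact hε.ne' h0
    · have hfin := hfin.measure_univ_lt_top
      rw [Measure.restrict_apply_univ, Real.volume_Ioi] at hfin
      exact (lt_irrefl _ hfin)
  have hkey : u r ^ 2 ≤ 2 * ∫ t in Ioi r, |u t| * v t := by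
    refine le_of_forall_pos_le_add fun ε hε => ?_
    obtain ⟨s, hrs, hsε⟩ := hsmall ε hε
    have := habs s hrs
    linarith
  -- put the weight back
  have h4 : r ^ n * u r ^ 2 ≤ 2 * ∫ t in Ioi r, r ^ n * (|u t| * v t) := by
    rw [integral_const_mul]
    calc r ^ n * u r ^ 2 ≤ r ^ n * (2 * ∫ t in Ioi r, |u t| * v t) :=
          mul_le_mul_of_nonneg_left hkey hrn.le
      _ = 2 * (r ^ n * ∫ t in Ioi r, |u t| * v t) := by ring
  have h5 : ∫ t in Ioi r, r ^ n * (|u t| * v t) ≤ ∫ t in Ioi r, t ^ n * (|u t| * v t) := by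
    refine setIntegral_mono_on (huv.const_mul _) (hI1.mono_set (Ioi_subset_Ioi hr.le))
      measurableSet_Ioi fun t ht => ?_
    exact mul_le_mul_of_nonneg_right (pow_le_pow_left₀ hr.le (le_of_lt ht) n)
      (mul_nonneg (abs_nonneg _) (hv0 t))
  have h6 : ∫ t in Ioi r, t ^ n * (|u t| * v t) ≤ ∫ t in Ioi (0:ℝ), t ^ n * (|u t| * v t) := by
    refine setIntegral_mono_set hI1 ?_ (HasSubset.Subset.eventuallyLE (Ioi_subset_Ioi hr.le))
    filter_upwards [ae_restrict_mem measurableSet_Ioi] with t ht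
    exact mul_nonneg (pow_nonneg (le_of_lt ht) n) (mul_nonneg (abs_nonneg _) (hv0 t))
  linarith

open scoped ENNReal

lemma polar_lintegral {E : Type*} [NormedAddCommGroup E] [NormedSpace ℝ E] [MeasurableSpace E]
    [BorelSpace E] [FiniteDimensional ℝ E] [Nontrivial E] (μ : Measure E) [μ.IsAddHaarMeasure]
    {f : E → ℝ≥0∞} (hf : Measurable f) :
    ∫⁻ x, f x ∂μ = ∫⁻ ω : sphere (0:E) 1, ∫⁻ r in Ioi (0:ℝ),
      ENNReal.ofReal (r ^ (Module.finrank ℝ E - 1)) * f (r • (ω : E)) ∂volume ∂μ.toSphere := by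
  have hC : Continuous fun p : sphere (0:E) 1 × Ioi (0:ℝ) => (p.2 : ℝ) • (p.1 : E) :=
    (continuous_subtype_val.comp continuous_snd).smul (continuous_subtype_val.comp continuous_fst)
  have hF : Measurable fun p : sphere (0:E) 1 × Ioi (0:ℝ) => f ((p.2 : ℝ) • (p.1 : E)) :=
    hf.comp hC.measurable
  have h0 : ∫⁻ x, f x ∂μ = ∫⁻ x : ({0}ᶜ : Set E), f (x : E) ∂(μ.comap (↑)) := by
    rw [lintegral_subtype_comap (measurableSet_singleton (0:E)).compl,
      restrict_compl_singleton]
  have h1 : ∀ x : ({0}ᶜ : Set E), f (x : E) =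
      (fun p : sphere (0:E) 1 × Ioi (0:ℝ) => f ((p.2 : ℝ) • (p.1 : E)))
        (homeomorphUnitSphereProd E x) := by
    intro x
    simp only [homeomorphUnitSphereProd_apply_fst_coe, homeomorphUnitSphereProd_apply_snd_coe]
    rw [smul_inv_smul₀ (norm_ne_zero_iff.2 x.2)]
  rw [h0, lintegral_congr h1,
    (μ.measurePreserving_homeomorphUnitSphereProd).lintegral_comp hF,
    lintegral_prod _ hF.aemeasurable]
  refine lintegral_congr fun ω => ?_
  have h2 : (∫⁻ y : Ioi (0:ℝ), f ((y : ℝ) • (ω : E))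
      ∂(Measure.comap Subtype.val volume).withDensity
        (fun r : Ioi (0:ℝ) => ENNReal.ofReal ((r:ℝ) ^ (Module.finrank ℝ E - 1)))) =
      ∫⁻ y : Ioi (0:ℝ), ENNReal.ofReal ((y:ℝ) ^ (Module.finrank ℝ E - 1)) * f ((y : ℝ) • (ω : E))
        ∂(Measure.comap Subtype.val volume) :=
    lintegral_withDensity_eq_lintegral_mul _
      ((measurable_subtype_coe.pow_const _).ennreal_ofReal)
      (hf.comp (measurable_subtype_coe.smul_const (ω : E)))
  rw [Measure.volumeIoiPow]
  refine h2.trans ?_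
  exact lintegral_subtype_comap measurableSet_Ioi
    (fun r : ℝ => ENNReal.ofReal (r ^ (Module.finrank ℝ E - 1)) * f (r • (ω : E)))


lemma annulus_bound {E : Type*} [NormedAddCommGroup E] [NormedSpace ℝ E] [MeasurableSpace E]
    [BorelSpace E] [FiniteDimensional ℝ E] [Nontrivial E] (μ : Measure E) [μ.IsAddHaarMeasure]
    (g : E → ℝ) (hgdiff : Differentiable ℝ g) (hg2 : MemLp g 2 μ)
    (hg'2 : MemLp (fun x => ‖fderiv ℝ g x‖) 2 μ)
    (R₁ R₂ : ℝ) (hR₁ : 0 ≤ R₁) (hR₁₂ : R₁ ≤ R₂) :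
    ∫ x in {x : E | R₁ ≤ ‖x‖ ∧ ‖x‖ ≤ R₂}, (g x) ^ 2 ∂μ ≤
      2 * (R₂ - R₁) * Real.sqrt (∫ x, (g x) ^ 2 ∂μ) *
        Real.sqrt (∫ x, ‖fderiv ℝ g x‖ ^ 2 ∂μ) := by
  classical
  set n := Module.finrank ℝ E - 1 with hn
  set A : Set E := {x | R₁ ≤ ‖x‖ ∧ ‖x‖ ≤ R₂} with hA
  set ν := μ.toSphere with hν
  have hAmeas : MeasurableSet A := by
    have : A = (fun x : E => ‖x‖) ⁻¹' (Icc R₁ R₂) := by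
      ext x; simp [hA, mem_Icc]
    rw [this]
    exact continuous_norm.measurable measurableSet_Icc
  have hgm : Measurable g := hgdiff.continuous.measurable
  have hfm : Measurable fun x : E => ‖fderiv ℝ g x‖ := (measurable_fderiv ℝ g).norm
  have hg2i : Integrable (fun x : E => g x ^ 2) μ := hg2.integrable_sq
  have hf2i : Integrable (fun x : E => ‖fderiv ℝ g x‖ ^ 2) μ := MemLp.integrable_sq hg'2
  set a := ∫ x : E, g x ^ 2 ∂μ with ha
  set b := ∫ x : E, ‖fderiv ℝ g x‖ ^ 2 ∂μ with hb
  have ha0 : 0 ≤ a := integral_nonneg fun x => sq_nonneg _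
  have hb0 : 0 ≤ b := integral_nonneg fun x => sq_nonneg _
  have hLg : ∫⁻ x : E, ENNReal.ofReal (g x ^ 2) ∂μ = ENNReal.ofReal a :=
    (ofReal_integral_eq_lintegral_ofReal hg2i (ae_of_all _ fun x => sq_nonneg _)).symm
  have hLf : ∫⁻ x : E, ENNReal.ofReal (‖fderiv ℝ g x‖ ^ 2) ∂μ = ENNReal.ofReal b :=
    (ofReal_integral_eq_lintegral_ofReal hf2i (ae_of_all _ fun x => sq_nonneg _)).symm
  -- Cauchy-Schwarz
  have hCS : ∫⁻ x : E, ENNReal.ofReal (|g x| * ‖fderiv ℝ g x‖) ∂μ ≤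
      ENNReal.ofReal (Real.sqrt a * Real.sqrt b) := by
    have h22 : Real.HolderConjugate 2 2 := Real.HolderConjugate.two_two
    have hcs := ENNReal.lintegral_mul_le_Lp_mul_Lq μ h22
      (f := fun x : E => ENNReal.ofReal |g x|)
      (g := fun x : E => ENNReal.ofReal ‖fderiv ℝ g x‖)
      hgm.abs.ennreal_ofReal.aemeasurable hfm.ennreal_ofReal.aemeasurable
    have e1 : ∀ x : E, (ENNReal.ofReal |g x|) ^ (2:ℝ) = ENNReal.ofReal (g x ^ 2) := by
      intro x
      rw [ENNReal.ofReal_rpow_of_nonneg (abs_nonneg _) (by norm_num : (0:ℝ) ≤ 2)]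
      congr 1
      rw [show (2:ℝ) = ((2:ℕ):ℝ) by norm_num, Real.rpow_natCast, sq_abs]
    have e2 : ∀ x : E, (ENNReal.ofReal ‖fderiv ℝ g x‖) ^ (2:ℝ) =
        ENNReal.ofReal (‖fderiv ℝ g x‖ ^ 2) := by
      intro x
      rw [ENNReal.ofReal_rpow_of_nonneg (norm_nonneg _) (by norm_num : (0:ℝ) ≤ 2)]
      congr 1
      rw [show (2:ℝ) = ((2:ℕ):ℝ) by norm_num, Real.rpow_natCast]
    simp only [Pi.mul_apply] at hcs
    calc ∫⁻ x : E, ENNReal.ofReal (|g x| * ‖fderiv ℝ g x‖) ∂μ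
        = ∫⁻ x : E, ENNReal.ofReal |g x| * ENNReal.ofReal ‖fderiv ℝ g x‖ ∂μ := by
          refine lintegral_congr fun x => ?_
          rw [ENNReal.ofReal_mul (abs_nonneg _)]
      _ ≤ (∫⁻ x : E, (ENNReal.ofReal |g x|) ^ (2:ℝ) ∂μ) ^ (1/(2:ℝ)) *
          (∫⁻ x : E, (ENNReal.ofReal ‖fderiv ℝ g x‖) ^ (2:ℝ) ∂μ) ^ (1/(2:ℝ)) := hcs
      _ = (ENNReal.ofReal a) ^ (1/(2:ℝ)) * (ENNReal.ofReal b) ^ (1/(2:ℝ)) := by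
          rw [lintegral_congr e1, lintegral_congr e2, hLg, hLf]
      _ = ENNReal.ofReal (Real.sqrt a * Real.sqrt b) := by
          rw [ENNReal.ofReal_rpow_of_nonneg ha0 (by norm_num : (0:ℝ) ≤ 1/2),
            ENNReal.ofReal_rpow_of_nonneg hb0 (by norm_num : (0:ℝ) ≤ 1/2),
            ← ENNReal.ofReal_mul (Real.rpow_nonneg ha0 _)]
          rw [Real.sqrt_eq_rpow, Real.sqrt_eq_rpow]
  -- polar coordinate formulas
  have hsm : Continuous fun p : sphere (0:E) 1 × ℝ => p.2 • (p.1 : E) :=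
    continuous_snd.smul (continuous_subtype_val.comp continuous_fst)
  have hmg2 : Measurable fun x : E => ENNReal.ofReal (g x ^ 2) :=
    (hgm.pow_const 2).ennreal_ofReal
  have hmA : Measurable (A.indicator fun x : E => ENNReal.ofReal (g x ^ 2)) :=
    hmg2.indicator hAmeas
  have hmuv : Measurable fun x : E => ENNReal.ofReal (|g x| * ‖fderiv ℝ g x‖) :=
    (hgm.abs.mul hfm).ennreal_ofReal
  have PA : ∫⁻ x in A, ENNReal.ofReal (g x ^ 2) ∂μ =
      ∫⁻ ω : sphere (0:E) 1, ∫⁻ r in Ioi (0:ℝ), ENNReal.ofReal (r ^ n) *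
        (A.indicator fun x : E => ENNReal.ofReal (g x ^ 2)) (r • (ω:E)) ∂volume ∂ν := by
    rw [← lintegral_indicator hAmeas]
    exact polar_lintegral μ hmA
  have Pg : ∫⁻ x : E, ENNReal.ofReal (g x ^ 2) ∂μ =
      ∫⁻ ω : sphere (0:E) 1, ∫⁻ r in Ioi (0:ℝ), ENNReal.ofReal (r ^ n) *
        ENNReal.ofReal (g (r • (ω:E)) ^ 2) ∂volume ∂ν := polar_lintegral μ hmg2
  have Puv : ∫⁻ x : E, ENNReal.ofReal (|g x| * ‖fderiv ℝ g x‖) ∂μ =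
      ∫⁻ ω : sphere (0:E) 1, ∫⁻ r in Ioi (0:ℝ), ENNReal.ofReal (r ^ n) *
        ENNReal.ofReal (|g (r • (ω:E))| * ‖fderiv ℝ g (r • (ω:E))‖) ∂volume ∂ν :=
    polar_lintegral μ hmuv
  -- measurability of slices
  have hmeasωg : Measurable fun ω : sphere (0:E) 1 => ∫⁻ r in Ioi (0:ℝ),
      ENNReal.ofReal (r ^ n) * ENNReal.ofReal (g (r • (ω:E)) ^ 2) ∂volume := by
    refine Measurable.lintegral_prod_right' (f := fun q : sphere (0:E) 1 × ℝ =>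
      ENNReal.ofReal (q.2 ^ n) * ENNReal.ofReal (g (q.2 • (q.1:E)) ^ 2)) ?_
    exact ((measurable_snd.pow_const n).ennreal_ofReal).mul
      (((hgm.comp hsm.measurable).pow_const 2).ennreal_ofReal)
  have hmeasωuv : Measurable fun ω : sphere (0:E) 1 => ∫⁻ r in Ioi (0:ℝ),
      ENNReal.ofReal (r ^ n) * ENNReal.ofReal (|g (r • (ω:E))| *
        ‖fderiv ℝ g (r • (ω:E))‖) ∂volume := by
    refine Measurable.lintegral_prod_right' (f := fun q : sphere (0:E) 1 × ℝ =>
      ENNReal.ofReal (q.2 ^ n) * ENNReal.ofReal (|g (q.2 • (q.1:E))| *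
        ‖fderiv ℝ g (q.2 • (q.1:E))‖)) ?_
    exact ((measurable_snd.pow_const n).ennreal_ofReal).mul
      (((hgm.comp hsm.measurable).abs.mul
        (((measurable_fderiv ℝ g).comp hsm.measurable).norm)).ennreal_ofReal)
  -- a.e. finiteness of slices
  have hfin_g : ∀ᵐ (ω : sphere (0:E) 1) ∂ν, (∫⁻ r in Ioi (0:ℝ), ENNReal.ofReal (r ^ n) *
      ENNReal.ofReal (g (r • (ω:E)) ^ 2) ∂volume) < ⊤ := by
    refine ae_lt_top hmeasωg ?_
    rw [← Pg, hLg]; exact ENNReal.ofReal_ne_top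
  have hfin_uv : ∀ᵐ (ω : sphere (0:E) 1) ∂ν, (∫⁻ r in Ioi (0:ℝ), ENNReal.ofReal (r ^ n) *
      ENNReal.ofReal (|g (r • (ω:E))| * ‖fderiv ℝ g (r • (ω:E))‖) ∂volume) < ⊤ := by
    refine ae_lt_top hmeasωuv ?_
    rw [← Puv]
    exact (lt_of_le_of_lt hCS ENNReal.ofReal_lt_top).ne
  -- the per-direction estimate
  have hcore : ∀ᵐ (ω : sphere (0:E) 1) ∂ν, (∫⁻ r in Ioi (0:ℝ), ENNReal.ofReal (r ^ n) *
        (A.indicator fun x : E => ENNReal.ofReal (g x ^ 2)) (r • (ω:E)) ∂volume) ≤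
      ENNReal.ofReal (2 * (R₂ - R₁)) * ∫⁻ r in Ioi (0:ℝ), ENNReal.ofReal (r ^ n) *
        ENNReal.ofReal (|g (r • (ω:E))| * ‖fderiv ℝ g (r • (ω:E))‖) ∂volume := by
    filter_upwards [hfin_g, hfin_uv] with ω hfg hfuv
    set u : ℝ → ℝ := fun r => g (r • (ω:E)) with hu
    set v : ℝ → ℝ := fun r => ‖fderiv ℝ g (r • (ω:E))‖ with hv
    have hω1 : ‖(ω:E)‖ = 1 := mem_sphere_zero_iff_norm.mp ω.2
    have hderiv : ∀ r : ℝ, HasDerivAt u (fderiv ℝ g (r • (ω:E)) (ω:E)) r := by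
      intro r
      have h1 : HasDerivAt (fun t : ℝ => t • (ω:E)) ((1:ℝ) • (ω:E)) r :=
        (hasDerivAt_id r).smul_const (ω:E)
      rw [one_smul] at h1
      exact (hgdiff (r • (ω:E))).hasFDerivAt.comp_hasDerivAt r h1
    have hud : Differentiable ℝ u := fun r => (hderiv r).differentiableAt
    have hvm : Measurable v := ((measurable_fderiv ℝ g).comp
      (measurable_id.smul_const (ω:E))).norm
    have hv0 : ∀ s, 0 ≤ v s := fun s => norm_nonneg _
    have hbnd : ∀ s, |deriv u s| ≤ v s := by
      intro s
      rw [(hderiv s).deriv, ← Real.norm_eq_abs]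
      calc ‖fderiv ℝ g (s • (ω:E)) (ω:E)‖ ≤ ‖fderiv ℝ g (s • (ω:E))‖ * ‖(ω:E)‖ :=
            (fderiv ℝ g (s • (ω:E))).le_opNorm (ω:E)
        _ = v s := by rw [hω1, mul_one]
    -- integrability of the slices
    have hconv1 : ∀ᵐ r ∂(volume.restrict (Ioi (0:ℝ))),
        ENNReal.ofReal (r ^ n) * ENNReal.ofReal (|u r| * v r)
          = ENNReal.ofReal (r ^ n * (|u r| * v r)) := by
      filter_upwards [ae_restrict_mem measurableSet_Ioi] with r hr
      rw [ENNReal.ofReal_mul (pow_nonneg (le_of_lt hr) n)]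
    have hconv2 : ∀ᵐ r ∂(volume.restrict (Ioi (0:ℝ))),
        ENNReal.ofReal (r ^ n) * ENNReal.ofReal (u r ^ 2)
          = ENNReal.ofReal (r ^ n * u r ^ 2) := by
      filter_upwards [ae_restrict_mem measurableSet_Ioi] with r hr
      rw [ENNReal.ofReal_mul (pow_nonneg (le_of_lt hr) n)]
    have hI1 : IntegrableOn (fun s => s ^ n * (|u s| * v s)) (Ioi (0:ℝ)) := by
      constructor
      · exact ((measurable_id.pow_const n).mul
          ((hud.continuous.measurable.abs).mul hvm)).aestronglyMeasurable
      · rw [hasFiniteIntegral_iff_ofReal ?pos1]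
        case pos1 =>
          filter_upwards [ae_restrict_mem measurableSet_Ioi] with r hr
          exact mul_nonneg (pow_nonneg hr.le n) (mul_nonneg (abs_nonneg _) (hv0 r))
        calc ∫⁻ r in Ioi (0:ℝ), ENNReal.ofReal (r ^ n * (|u r| * v r)) ∂volume
            = ∫⁻ r in Ioi (0:ℝ), ENNReal.ofReal (r ^ n) * ENNReal.ofReal (|u r| * v r) ∂volume :=
              (lintegral_congr_ae hconv1).symm
          _ < ⊤ := hfuv
    have hI2 : IntegrableOn (fun s => s ^ n * u s ^ 2) (Ioi (0:ℝ)) := by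
      constructor
      · exact ((measurable_id.pow_const n).mul
          (hud.continuous.measurable.pow_const 2)).aestronglyMeasurable
      · rw [hasFiniteIntegral_iff_ofReal ?pos2]
        case pos2 =>
          filter_upwards [ae_restrict_mem measurableSet_Ioi] with r hr
          exact mul_nonneg (pow_nonneg hr.le n) (sq_nonneg _)
        calc ∫⁻ r in Ioi (0:ℝ), ENNReal.ofReal (r ^ n * u r ^ 2) ∂volume
            = ∫⁻ r in Ioi (0:ℝ), ENNReal.ofReal (r ^ n) * ENNReal.ofReal (u r ^ 2) ∂volume :=
              (lintegral_congr_ae hconv2).symm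
          _ < ⊤ := hfg
    set C := 2 * ∫ s in Ioi (0:ℝ), s ^ n * (|u s| * v s) with hC
    -- rewrite the left-hand side
    have hLrw : (∫⁻ r in Ioi (0:ℝ), ENNReal.ofReal (r ^ n) *
        (A.indicator fun x : E => ENNReal.ofReal (g x ^ 2)) (r • (ω:E)) ∂volume)
        = ∫⁻ r in Icc R₁ R₂ ∩ Ioi (0:ℝ), ENNReal.ofReal (r ^ n * u r ^ 2) ∂volume := by
      have e : ∀ᵐ r ∂(volume.restrict (Ioi (0:ℝ))),
          ENNReal.ofReal (r ^ n) *
            (A.indicator fun x : E => ENNReal.ofReal (g x ^ 2)) (r • (ω:E))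
            = (Icc R₁ R₂).indicator (fun r => ENNReal.ofReal (r ^ n * u r ^ 2)) r := by
        filter_upwards [ae_restrict_mem measurableSet_Ioi] with r hr
        have hnorm : ‖r • (ω:E)‖ = r := by
          rw [norm_smul, hω1, mul_one, Real.norm_eq_abs, abs_of_pos hr]
        have hmem : (r • (ω:E)) ∈ A ↔ r ∈ Icc R₁ R₂ := by
          rw [hA]; simp only [mem_setOf_eq, hnorm, mem_Icc]
        by_cases hrA : r ∈ Icc R₁ R₂
        · rw [indicator_of_mem (hmem.mpr hrA), indicator_of_mem hrA,
            ENNReal.ofReal_mul (pow_nonneg hr.le n)]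
        · rw [indicator_of_notMem (fun hc => hrA (hmem.mp hc)),
            indicator_of_notMem hrA, mul_zero]
      rw [lintegral_congr_ae e, lintegral_indicator measurableSet_Icc,
        Measure.restrict_restrict measurableSet_Icc]
    rw [hLrw]
    -- bound by a constant on a set of measure R₂ - R₁
    have hb1 : (∫⁻ r in Icc R₁ R₂ ∩ Ioi (0:ℝ), ENNReal.ofReal (r ^ n * u r ^ 2) ∂volume)
        ≤ ENNReal.ofReal C * ENNReal.ofReal (R₂ - R₁) := by
      calc ∫⁻ r in Icc R₁ R₂ ∩ Ioi (0:ℝ), ENNReal.ofReal (r ^ n * u r ^ 2) ∂volume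
          ≤ ∫⁻ _ in Icc R₁ R₂ ∩ Ioi (0:ℝ), ENNReal.ofReal C ∂volume := by
            refine lintegral_mono_ae ?_
            filter_upwards [ae_restrict_mem (measurableSet_Icc.inter measurableSet_Ioi)]
              with r hr
            exact ENNReal.ofReal_le_ofReal (key1D u v hud hvm hv0 hbnd n hr.2 hI1 hI2)
        _ = ENNReal.ofReal C * volume (Icc R₁ R₂ ∩ Ioi (0:ℝ)) := setLIntegral_const _ _
        _ ≤ ENNReal.ofReal C * volume (Icc R₁ R₂) :=
            mul_le_mul_right (measure_mono inter_subset_left) _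
        _ = ENNReal.ofReal C * ENNReal.ofReal (R₂ - R₁) := by rw [Real.volume_Icc]
    refine le_trans hb1 ?_
    have hCrw : ENNReal.ofReal C = ENNReal.ofReal 2 *
        ∫⁻ r in Ioi (0:ℝ), ENNReal.ofReal (r ^ n) * ENNReal.ofReal (|u r| * v r) ∂volume := by
      rw [hC, ENNReal.ofReal_mul (by norm_num : (0:ℝ) ≤ 2),
        ofReal_integral_eq_lintegral_ofReal hI1 ?pos3, lintegral_congr_ae hconv1]
      case pos3 =>
        filter_upwards [ae_restrict_mem measurableSet_Ioi] with r hr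
        exact mul_nonneg (pow_nonneg hr.le n) (mul_nonneg (abs_nonneg _) (hv0 r))
    rw [hCrw, ENNReal.ofReal_mul (by norm_num : (0:ℝ) ≤ 2)]
    exact le_of_eq (by ring)
  -- assemble
  have hmain : ∫⁻ x in A, ENNReal.ofReal (g x ^ 2) ∂μ ≤
      ENNReal.ofReal (2 * (R₂ - R₁)) * ENNReal.ofReal (Real.sqrt a * Real.sqrt b) := by
    rw [PA]
    refine le_trans (lintegral_mono_ae hcore) ?_
    rw [lintegral_const_mul' _ _ ENNReal.ofReal_ne_top, ← Puv]
    exact mul_le_mul_right hCS _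
  have hfinal : ∫ x in A, g x ^ 2 ∂μ =
      (∫⁻ x in A, ENNReal.ofReal (g x ^ 2) ∂μ).toReal :=
    integral_eq_lintegral_of_nonneg_ae (ae_of_all _ fun x => sq_nonneg _)
      ((hgm.pow_const 2).aestronglyMeasurable)
  rw [hfinal, show 2 * (R₂ - R₁) * Real.sqrt a * Real.sqrt b
      = 2 * (R₂ - R₁) * (Real.sqrt a * Real.sqrt b) by ring]
  refine ENNReal.toReal_le_of_le_ofReal ?_ ?_
  · have : (0:ℝ) ≤ 2 * (R₂ - R₁) := by linarith
    exact mul_nonneg this (mul_nonneg (Real.sqrt_nonneg a) (Real.sqrt_nonneg b))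
  · rw [ENNReal.ofReal_mul (by linarith : (0:ℝ) ≤ 2 * (R₂ - R₁))]
    exact hmain

/-- For every `g ∈ H¹(ℝ^d)` (`d ≥ 2`) and radii `0 ≤ R₁ ≤ R₂`, the integral of `g²`
over the annulus `{x : R₁ ≤ |x| ≤ R₂}` is at most `2(R₂ - R₁)‖g‖_{L²}‖∇g‖_{L²}`. -/
theorem stmt_0 (d : ℕ) (hd : 2 ≤ d) (g : EuclideanSpace ℝ (Fin d) → ℝ)
    (hgdiff : Differentiable ℝ g) (hg2 : MemLp g 2 volume)
    (hg'2 : MemLp (fun x => ‖fderiv ℝ g x‖) 2 volume)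
    (R₁ R₂ : ℝ) (hR₁ : 0 ≤ R₁) (hR₁₂ : R₁ ≤ R₂) :
    ∫ x in {x : EuclideanSpace ℝ (Fin d) | R₁ ≤ ‖x‖ ∧ ‖x‖ ≤ R₂}, (g x) ^ 2 ≤
      2 * (R₂ - R₁) * Real.sqrt (∫ x, (g x) ^ 2) *
        Real.sqrt (∫ x, ‖fderiv ℝ g x‖ ^ 2) := by
  haveI : Nonempty (Fin d) := ⟨⟨0, by omega⟩⟩
  haveI : Nontrivial (EuclideanSpace ℝ (Fin d)) := inferInstance
  exact annulus_bound volume g hgdiff hg2 hg'2 R₁ R₂ hR₁ hR₁₂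
end

section
/- Let B_R ⊂ ℝ^d be the ball of radius R centered at 0 and let ℓ ∈ ℕ. There is a constant C depending only on d and ℓ such that every φ ∈ H¹₀(B_R) satisfies ‖φ‖_{L²(B_R)} ≤ C ‖∇φ‖_{L²(B_R)}^{ℓ/(ℓ+1)} ‖ |y|^ℓ φ ‖_{L²(B_R)}^{1/(ℓ+1)}. -/
open Real

lemma alg_aux {a w g m : ℝ} (ℓ : ℕ) (hℓ : 1 ≤ ℓ) (ha : 0 ≤ a) (hw : 0 ≤ w) (hg : 0 ≤ g)
    (hm : 0 ≤ m)
    (h1 : a ≤ 2 * w ^ (1/2 : ℝ) * g ^ (1/2 : ℝ))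
    (h2 : w ≤ a ^ (1 - (ℓ : ℝ)⁻¹) * m ^ ((ℓ : ℝ)⁻¹)) :
    a ^ (1/2 : ℝ) ≤ 2 * (g ^ (1/2 : ℝ)) ^ ((ℓ : ℝ) / (ℓ + 1)) *
      (m ^ (1/2 : ℝ)) ^ (1 / ((ℓ : ℝ) + 1)) := by
  have hL : (1 : ℝ) ≤ (ℓ : ℝ) := by exact_mod_cast hℓ
  have hL0 : (0 : ℝ) < (ℓ : ℝ) := by linarith
  have hL1 : (0 : ℝ) < (ℓ : ℝ) + 1 := by linarith
  set L : ℝ := (ℓ : ℝ) with hLdef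
  rcases eq_or_lt_of_le ha with rfl | hapos
  · rw [Real.zero_rpow (by norm_num)]
    positivity
  -- key : a ≤ 2 * (a ^ θ * m ^ (1/(2*L))) * g ^ (1/2)
  have hwpow : w ^ (1/2 : ℝ) ≤ a ^ ((1 - L⁻¹)/2) * m ^ (1/(2*L)) := by
    calc w ^ (1/2 : ℝ) ≤ (a ^ (1 - L⁻¹) * m ^ L⁻¹) ^ (1/2 : ℝ) :=
          Real.rpow_le_rpow hw h2 (by norm_num)
      _ = a ^ ((1 - L⁻¹)/2) * m ^ (1/(2*L)) := by
          rw [Real.mul_rpow (by positivity) (by positivity), ← Real.rpow_mul ha,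
            ← Real.rpow_mul hm]
          ring_nf
  have key : a ≤ 2 * (a ^ ((1 - L⁻¹)/2) * m ^ (1/(2*L))) * g ^ (1/2 : ℝ) := by
    calc a ≤ 2 * w ^ (1/2 : ℝ) * g ^ (1/2 : ℝ) := h1
      _ ≤ 2 * (a ^ ((1 - L⁻¹)/2) * m ^ (1/(2*L))) * g ^ (1/2 : ℝ) := by
          have := Real.rpow_nonneg hg (1/2 : ℝ)
          nlinarith [Real.rpow_nonneg hw (1/2 : ℝ)]
  set θ : ℝ := (1 - L⁻¹)/2 with hθdef
  have hθ : θ + (L+1)/(2*L) = 1 := by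
    rw [hθdef]
    field_simp
    ring
  have hstep : a ^ ((L+1)/(2*L)) ≤ 2 * m ^ (1/(2*L)) * g ^ (1/2 : ℝ) := by
    have hcancel : a ^ ((L+1)/(2*L)) * a ^ θ ≤ (2 * m ^ (1/(2*L)) * g ^ (1/2 : ℝ)) * a ^ θ := by
      rw [← Real.rpow_add hapos]
      calc a ^ ((L+1)/(2*L) + θ) = a := by rw [add_comm, hθ, Real.rpow_one]
        _ ≤ 2 * (a ^ θ * m ^ (1/(2*L))) * g ^ (1/2 : ℝ) := key
        _ = (2 * m ^ (1/(2*L)) * g ^ (1/2 : ℝ)) * a ^ θ := by ring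
    exact le_of_mul_le_mul_right hcancel (Real.rpow_pos_of_pos hapos θ)
  set c : ℝ := L / (L + 1) with hcdef
  have hc0 : 0 < c := by positivity
  have hc1 : c ≤ 1 := by rw [hcdef, div_le_one hL1]; linarith
  have hfinal : a ^ (1/2 : ℝ) ≤ (2 * m ^ (1/(2*L)) * g ^ (1/2 : ℝ)) ^ c := by
    have : a ^ (1/2 : ℝ) = (a ^ ((L+1)/(2*L))) ^ c := by
      rw [← Real.rpow_mul ha]
      congr 1
      rw [hcdef]
      field_simp
    rw [this]
    exact Real.rpow_le_rpow (Real.rpow_nonneg ha _) hstep hc0.le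
  have hM : (m ^ (1/(2*L) : ℝ)) ^ c = (m ^ (1/2 : ℝ)) ^ (1/(L+1)) := by
    rw [← Real.rpow_mul hm, ← Real.rpow_mul hm]
    congr 1
    rw [hcdef]
    field_simp
  have hexp : (2 * m ^ (1/(2*L)) * g ^ (1/2 : ℝ)) ^ c
      = 2 ^ c * (m ^ (1/2 : ℝ)) ^ (1/(L+1)) * (g ^ (1/2 : ℝ)) ^ c := by
    rw [Real.mul_rpow (by positivity) (by positivity),
      Real.mul_rpow (by positivity) (by positivity), hM]
  have h2c : (2:ℝ) ^ c ≤ 2 := by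
    calc (2:ℝ) ^ c ≤ 2 ^ (1:ℝ) := Real.rpow_le_rpow_of_exponent_le one_le_two hc1
      _ = 2 := Real.rpow_one 2
  calc a ^ (1/2 : ℝ) ≤ (2 * m ^ (1/(2*L)) * g ^ (1/2 : ℝ)) ^ c := hfinal
    _ = 2 ^ c * (m ^ (1/2 : ℝ)) ^ (1/(L+1)) * (g ^ (1/2 : ℝ)) ^ c := hexp
    _ ≤ 2 * (g ^ (1/2 : ℝ)) ^ c * (m ^ (1/2 : ℝ)) ^ (1/(L+1)) := by
        have h1' : (0:ℝ) ≤ (m ^ (1/2 : ℝ)) ^ (1/(L+1)) := by positivity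
        have h2' : (0:ℝ) ≤ (g ^ (1/2 : ℝ)) ^ c := by positivity
        calc 2 ^ c * (m ^ (1/2 : ℝ)) ^ (1/(L+1)) * (g ^ (1/2 : ℝ)) ^ c
            = 2 ^ c * ((m ^ (1/2 : ℝ)) ^ (1/(L+1)) * (g ^ (1/2 : ℝ)) ^ c) := by ring
          _ ≤ 2 * ((m ^ (1/2 : ℝ)) ^ (1/(L+1)) * (g ^ (1/2 : ℝ)) ^ c) :=
              mul_le_mul_of_nonneg_right h2c (mul_nonneg h1' h2')
          _ = 2 * (g ^ (1/2 : ℝ)) ^ c * (m ^ (1/2 : ℝ)) ^ (1/(L+1)) := by ring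


open MeasureTheory Metric Set

lemma step1_lemma (d : ℕ) (hd : 1 ≤ d) (φ : EuclideanSpace ℝ (Fin d) → ℝ)
    (hdiff : Differentiable ℝ φ) (hφcs : HasCompactSupport φ)
    (hD2 : MemLp (fun x => ‖fderiv ℝ φ x‖) 2 volume) :
    ∫ x, φ x ^ 2 ≤ 2 * (∫ x, ‖x‖ ^ 2 * φ x ^ 2) ^ (1/2 : ℝ) *
      (∫ x, ‖fderiv ℝ φ x‖ ^ 2) ^ (1/2 : ℝ) := by
  classical
  have hcont : Continuous φ := hdiff.continuous
  set i₀ : Fin d := ⟨0, hd⟩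
  set e : EuclideanSpace ℝ (Fin d) := EuclideanSpace.single i₀ (1:ℝ) with hedef
  have he_app : e i₀ = 1 := by rw [hedef, EuclideanSpace.single_apply]; simp
  -- measurability / integrability of derivative terms
  have hDmeas : AEStronglyMeasurable (fun x => fderiv ℝ φ x e) volume :=
    (measurable_fderiv_apply_const (𝕜 := ℝ) (f := φ) e).aestronglyMeasurable
  have hDe_bound : ∀ x : EuclideanSpace ℝ (Fin d), |fderiv ℝ φ x e| ≤ ‖fderiv ℝ φ x‖ := by
    intro x
    calc |fderiv ℝ φ x e| = ‖fderiv ℝ φ x e‖ := rfl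
      _ ≤ ‖fderiv ℝ φ x‖ * ‖e‖ := (fderiv ℝ φ x).le_opNorm e
      _ = ‖fderiv ℝ φ x‖ := by rw [hedef, EuclideanSpace.norm_single]; simp
  have hDe2 : MemLp (fun x => fderiv ℝ φ x e) 2 volume := by
    apply hD2.of_le hDmeas
    exact Filter.Eventually.of_forall fun x => by
      simpa [Real.norm_eq_abs, abs_norm] using hDe_bound x
  have hD0 : ∀ x : EuclideanSpace ℝ (Fin d), x ∉ tsupport φ → fderiv ℝ φ x = 0 := by
    intro x hx
    by_contra h
    exact hx (support_fderiv_subset ℝ (Function.mem_support.2 h))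
  have hDe1 : Integrable (fun x => fderiv ℝ φ x e) volume := by
    rw [← memLp_one_iff_integrable]
    apply hDe2.mono_exponent_of_measure_support_ne_top
      (s := tsupport φ) (fun x hx => by rw [hD0 x hx]; rfl)
      hφcs.measure_lt_top.ne one_le_two
  have hnD1 : Integrable (fun x => ‖fderiv ℝ φ x‖) volume := by
    rw [← memLp_one_iff_integrable]
    apply hD2.mono_exponent_of_measure_support_ne_top
      (s := tsupport φ) (fun x hx => by rw [hD0 x hx]; simp)
      hφcs.measure_lt_top.ne one_le_two
  -- products with compact support
  have hgcont : Continuous (fun x : EuclideanSpace ℝ (Fin d) => x i₀ * φ x) :=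
    (EuclideanSpace.proj i₀).continuous.mul hcont
  have hgcs : HasCompactSupport (fun x : EuclideanSpace ℝ (Fin d) => x i₀ * φ x) := by
    apply HasCompactSupport.intro hφcs
    intro x hx
    rw [image_eq_zero_of_notMem_tsupport hx, mul_zero]
  obtain ⟨Cg, hCg⟩ := hgcs.exists_bound_of_continuous hgcont
  have I1 : Integrable (fun x : EuclideanSpace ℝ (Fin d) => φ x * φ x) volume :=
    (hcont.mul hcont).integrable_of_hasCompactSupport
      (by apply HasCompactSupport.intro hφcs; intro x hx;
          rw [Pi.mul_apply, image_eq_zero_of_notMem_tsupport hx, mul_zero])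
  have I2 : Integrable (fun x : EuclideanSpace ℝ (Fin d) =>
      (x i₀ * φ x) * fderiv ℝ φ x e) volume :=
    Integrable.bdd_mul hDe1 hgcont.aestronglyMeasurable (Filter.Eventually.of_forall hCg)
  -- derivative of g
  have hgd : ∀ x : EuclideanSpace ℝ (Fin d), HasFDerivAt (fun y : EuclideanSpace ℝ (Fin d) =>
      y i₀ * φ y) ((x i₀) • fderiv ℝ φ x + (φ x) • (EuclideanSpace.proj i₀ :
        EuclideanSpace ℝ (Fin d) →L[ℝ] ℝ)) x := by
    intro x
    exact ((EuclideanSpace.proj i₀).hasFDerivAt (x := x)).mul (hdiff x).hasFDerivAt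
  set g : EuclideanSpace ℝ (Fin d) → ℝ := fun y => y i₀ * φ y with hgdef
  have hgdiff : Differentiable ℝ g := fun x => (hgd x).differentiableAt
  have hgderiv : ∀ x, fderiv ℝ g x e = x i₀ * fderiv ℝ φ x e + φ x := by
    intro x
    rw [(hgd x).fderiv]
    simp only [ContinuousLinearMap.add_apply, ContinuousLinearMap.coe_smul',
      Pi.smul_apply, smul_eq_mul]
    have : (EuclideanSpace.proj i₀ : EuclideanSpace ℝ (Fin d) →L[ℝ] ℝ) e = 1 := by
      simpa using he_app
    rw [this, mul_one]
  have hfg' : Integrable (fun x => φ x * fderiv ℝ g x e) volume := by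
    apply (I1.add I2).congr
    apply Filter.Eventually.of_forall
    intro x
    simp only [Pi.add_apply]
    rw [hgderiv x]
    ring
  have hf'g : Integrable (fun x => fderiv ℝ φ x e * g x) volume :=
    I2.congr (Filter.Eventually.of_forall fun x => by simp only [hgdef]; ring)
  have hfgI : Integrable (fun x => φ x * g x) volume := by
    apply (hcont.mul hgcont).integrable_of_hasCompactSupport
    apply HasCompactSupport.intro hφcs
    intro x hx
    rw [Pi.mul_apply, image_eq_zero_of_notMem_tsupport hx, zero_mul]
  have hIBP := integral_mul_fderiv_eq_neg_fderiv_mul_of_integrable hf'g hfg' hfgI (fun x _ => hdiff x) (fun x _ => hgdiff x)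
  have key : ∫ x, φ x * φ x = -2 * ∫ x, (x i₀ * φ x) * fderiv ℝ φ x e := by
    have L : ∫ x, φ x * fderiv ℝ g x e
        = (∫ x, φ x * φ x) + ∫ x, (x i₀ * φ x) * fderiv ℝ φ x e := by
      rw [← integral_add I1 I2]
      apply integral_congr_ae
      apply Filter.Eventually.of_forall
      intro x
      simp only [Pi.add_apply]
      rw [hgderiv x]
      ring
    have Rr : ∫ x, fderiv ℝ φ x e * g x = ∫ x, (x i₀ * φ x) * fderiv ℝ φ x e := by
      apply integral_congr_ae
      apply Filter.Eventually.of_forall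
      intro x
      simp only [hgdef]
      ring
    rw [L, Rr] at hIBP
    linarith
  -- pointwise bound
  have habs_coord : ∀ x : EuclideanSpace ℝ (Fin d), |x i₀| ≤ ‖x‖ := by
    intro x
    have h := abs_real_inner_le_norm (EuclideanSpace.single i₀ (1:ℝ)) x
    simpa [EuclideanSpace.inner_single_left, EuclideanSpace.norm_single] using h
  have habs1 : ∀ x : EuclideanSpace ℝ (Fin d),
      |(x i₀ * φ x) * fderiv ℝ φ x e| ≤ (‖x‖ * |φ x|) * ‖fderiv ℝ φ x‖ := by
    intro x
    rw [abs_mul, abs_mul]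
    apply mul_le_mul _ (hDe_bound x) (abs_nonneg _) (by positivity)
    exact mul_le_mul_of_nonneg_right (habs_coord x) (abs_nonneg _)
  have hwcont : Continuous (fun x : EuclideanSpace ℝ (Fin d) => ‖x‖ * |φ x|) :=
    continuous_norm.mul hcont.abs
  have hwcs : HasCompactSupport (fun x : EuclideanSpace ℝ (Fin d) => ‖x‖ * |φ x|) := by
    apply HasCompactSupport.intro hφcs
    intro x hx
    rw [image_eq_zero_of_notMem_tsupport hx, abs_zero, mul_zero]
  obtain ⟨Cw, hCw⟩ := hwcs.exists_bound_of_continuous hwcont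
  have habs2 : Integrable (fun x : EuclideanSpace ℝ (Fin d) =>
      (‖x‖ * |φ x|) * ‖fderiv ℝ φ x‖) volume :=
    Integrable.bdd_mul hnD1 hwcont.aestronglyMeasurable (Filter.Eventually.of_forall hCw)
  have hmono : ∫ x, |(x i₀ * φ x) * fderiv ℝ φ x e|
      ≤ ∫ x, (‖x‖ * |φ x|) * ‖fderiv ℝ φ x‖ :=
    integral_mono I2.abs habs2 habs1
  have hneg : -∫ x, (x i₀ * φ x) * fderiv ℝ φ x e
      ≤ ∫ x, |(x i₀ * φ x) * fderiv ℝ φ x e| := by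
    have h1 := norm_integral_le_integral_norm (μ := volume)
      (f := fun x : EuclideanSpace ℝ (Fin d) => (x i₀ * φ x) * fderiv ℝ φ x e)
    simp only [Real.norm_eq_abs] at h1
    linarith [neg_abs_le (∫ x, (x i₀ * φ x) * fderiv ℝ φ x e)]
  -- Cauchy-Schwarz
  have hpq : Real.HolderConjugate 2 2 := Real.holderConjugate_iff.2 ⟨one_lt_two, by norm_num⟩
  have hCS := integral_mul_le_Lp_mul_Lq_of_nonneg (μ := volume) hpq
    (f := fun x : EuclideanSpace ℝ (Fin d) => ‖x‖ * |φ x|)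
    (g := fun x : EuclideanSpace ℝ (Fin d) => ‖fderiv ℝ φ x‖)
    (Filter.Eventually.of_forall fun x => by positivity)
    (Filter.Eventually.of_forall fun x => norm_nonneg _)
    (hwcont.memLp_of_hasCompactSupport hwcs)
    (by rw [(by norm_num : ENNReal.ofReal 2 = (2:ENNReal))]; exact hD2)
  have hr2 : ∀ y : ℝ, y ^ (2:ℝ) = y ^ 2 := fun y => by
    rw [show (2:ℝ) = ((2:ℕ):ℝ) by norm_num, Real.rpow_natCast]
  have hCS' : ∫ x, (‖x‖ * |φ x|) * ‖fderiv ℝ φ x‖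
      ≤ (∫ x, ‖x‖ ^ 2 * φ x ^ 2) ^ (1/2:ℝ) * (∫ x, ‖fderiv ℝ φ x‖ ^ 2) ^ (1/2:ℝ) := by
    calc ∫ x, (‖x‖ * |φ x|) * ‖fderiv ℝ φ x‖
        ≤ (∫ x, (‖x‖ * |φ x|) ^ (2:ℝ)) ^ (1/(2:ℝ)) * (∫ x, ‖fderiv ℝ φ x‖ ^ (2:ℝ)) ^ (1/(2:ℝ)) :=
          hCS
      _ = (∫ x, ‖x‖ ^ 2 * φ x ^ 2) ^ (1/2:ℝ) * (∫ x, ‖fderiv ℝ φ x‖ ^ 2) ^ (1/2:ℝ) := by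
          congr 2
          · apply integral_congr_ae
            apply Filter.Eventually.of_forall
            intro x
            show (‖x‖ * |φ x|) ^ (2:ℝ) = ‖x‖ ^ 2 * φ x ^ 2
            rw [hr2, mul_pow, sq_abs]
          · apply integral_congr_ae
            apply Filter.Eventually.of_forall
            intro x
            show ‖fderiv ℝ φ x‖ ^ (2:ℝ) = ‖fderiv ℝ φ x‖ ^ 2
            rw [hr2]
  calc ∫ x, φ x ^ 2 = ∫ x, φ x * φ x := by
        apply integral_congr_ae
        apply Filter.Eventually.of_forall
        intro x
        ring
    _ = -2 * ∫ x, (x i₀ * φ x) * fderiv ℝ φ x e := key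
    _ ≤ 2 * ∫ x, (‖x‖ * |φ x|) * ‖fderiv ℝ φ x‖ := by nlinarith
    _ ≤ 2 * ((∫ x, ‖x‖ ^ 2 * φ x ^ 2) ^ (1/2:ℝ) * (∫ x, ‖fderiv ℝ φ x‖ ^ 2) ^ (1/2:ℝ)) := by
        linarith
    _ = 2 * (∫ x, ‖x‖ ^ 2 * φ x ^ 2) ^ (1/2:ℝ) * (∫ x, ‖fderiv ℝ φ x‖ ^ 2) ^ (1/2:ℝ) := by ring


open MeasureTheory Metric Set

lemma step2_lemma (d ℓ : ℕ) (hℓ : 1 ≤ ℓ) (φ : EuclideanSpace ℝ (Fin d) → ℝ)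
    (hcont : Continuous φ) (hφcs : HasCompactSupport φ) :
    ∫ x, ‖x‖ ^ 2 * φ x ^ 2 ≤
      (∫ x, φ x ^ 2) ^ (1 - (ℓ:ℝ)⁻¹) * (∫ x, (‖x‖ ^ ℓ * φ x) ^ 2) ^ ((ℓ:ℝ)⁻¹) := by
  have hM : (∫ (x : EuclideanSpace ℝ (Fin d)), (‖x‖ ^ ℓ * φ x) ^ 2)
      = ∫ x, ‖x‖ ^ (2*ℓ) * φ x ^ 2 := by
    congr 1
    ext x
    rw [mul_pow, ← pow_mul]
    ring_nf
  rw [hM]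
  rcases eq_or_lt_of_le hℓ with h1 | h2
  · -- ℓ = 1
    rw [← h1]
    simp only [Nat.cast_one, inv_one, sub_self, Real.rpow_zero, one_mul, Real.rpow_one,
      mul_one, pow_one]
    exact le_of_eq (by norm_num)
  · -- ℓ ≥ 2
    have hL2 : (2:ℝ) ≤ (ℓ:ℝ) := by exact_mod_cast h2
    have hL0 : (0:ℝ) < (ℓ:ℝ) := by linarith
    have hL1 : (0:ℝ) < (ℓ:ℝ) - 1 := by linarith
    set L : ℝ := (ℓ:ℝ)
    set p : ℝ := L / (L - 1) with hpdef
    set q : ℝ := L with hqdef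
    have hpq : Real.HolderConjugate p q := by
      rw [Real.holderConjugate_iff]
      constructor
      · rw [hpdef, lt_div_iff₀ hL1]; linarith
      · rw [hpdef, hqdef]; field_simp; rw [sub_add_cancel]; exact div_self hL0.ne'
    set f : EuclideanSpace ℝ (Fin d) → ℝ := fun x => (φ x ^ 2) ^ ((L-1)/L) with hfdef
    set g : EuclideanSpace ℝ (Fin d) → ℝ := fun x => (‖x‖ ^ (2*ℓ) * φ x ^ 2) ^ (L⁻¹) with hgdef
    have hfc : Continuous f := (hcont.pow 2).rpow_const (fun x => Or.inr (by positivity))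
    have hgc : Continuous g :=
      ((continuous_norm.pow (2*ℓ)).mul (hcont.pow 2)).rpow_const (fun x => Or.inr (by positivity))
    have hfcs : HasCompactSupport f := by
      apply HasCompactSupport.intro hφcs
      intro x hx
      rw [hfdef]
      simp only [image_eq_zero_of_notMem_tsupport hx]
      rw [zero_pow (by norm_num), Real.zero_rpow (by positivity)]
    have hgcs : HasCompactSupport g := by
      apply HasCompactSupport.intro hφcs
      intro x hx
      rw [hgdef]
      simp only [image_eq_zero_of_notMem_tsupport hx]
      rw [zero_pow (by norm_num), mul_zero, Real.zero_rpow (by positivity)]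
    have hH := integral_mul_le_Lp_mul_Lq_of_nonneg (μ := volume) hpq
      (f := f) (g := g) (Filter.Eventually.of_forall fun x => by positivity)
      (Filter.Eventually.of_forall fun x => by positivity)
      (hfc.memLp_of_hasCompactSupport hfcs) (hgc.memLp_of_hasCompactSupport hgcs)
    have hfg : ∀ x : EuclideanSpace ℝ (Fin d), f x * g x = ‖x‖ ^ 2 * φ x ^ 2 := by
      intro x
      rw [hfdef, hgdef]
      simp only []
      rw [Real.mul_rpow (by positivity) (by positivity)]
      have h1 : ((‖x‖ ^ (2*ℓ) : ℝ)) ^ (L⁻¹) = ‖x‖ ^ 2 := by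
        rw [← Real.rpow_natCast (‖x‖) (2*ℓ), ← Real.rpow_mul (norm_nonneg x)]
        have : ((2*ℓ : ℕ) : ℝ) * L⁻¹ = 2 := by
          push_cast
          field_simp
          exact div_self hL0.ne'
        rw [this, Real.rpow_two]
      have h2 : (φ x ^ 2) ^ ((L-1)/L) * (φ x ^ 2) ^ (L⁻¹) = φ x ^ 2 := by
        rw [← Real.rpow_add' (sq_nonneg _) (by field_simp; rw [sub_add_cancel, show L / L = 1 from div_self hL0.ne']; exact one_ne_zero)]
        have : (L-1)/L + L⁻¹ = 1 := by field_simp; rw [sub_add_cancel]; exact div_self hL0.ne'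
        rw [this, Real.rpow_one]
      calc (φ x ^ 2) ^ ((L-1)/L) * ((‖x‖ ^ (2*ℓ) : ℝ) ^ (L⁻¹) * (φ x ^ 2) ^ (L⁻¹))
          = (‖x‖ ^ (2*ℓ) : ℝ) ^ (L⁻¹) * ((φ x ^ 2) ^ ((L-1)/L) * (φ x ^ 2) ^ (L⁻¹)) := by ring
        _ = ‖x‖ ^ 2 * φ x ^ 2 := by rw [h1, h2]
    have hfp : ∀ x : EuclideanSpace ℝ (Fin d), f x ^ p = φ x ^ 2 := by
      intro x
      rw [hfdef]
      simp only []
      rw [← Real.rpow_mul (sq_nonneg _)]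
      have : (L-1)/L * p = 1 := by rw [hpdef]; field_simp; exact mul_div_cancel_right₀ (L-1) hL0.ne'
      rw [this, Real.rpow_one]
    have hgq : ∀ x : EuclideanSpace ℝ (Fin d), g x ^ q = ‖x‖ ^ (2*ℓ) * φ x ^ 2 := by
      intro x
      rw [hgdef]
      simp only []
      rw [← Real.rpow_mul (by positivity)]
      rw [inv_mul_cancel₀ hL0.ne', Real.rpow_one]
    calc ∫ x, ‖x‖ ^ 2 * φ x ^ 2 = ∫ x, f x * g x := by
          congr 1; ext x; rw [hfg]
      _ ≤ (∫ x, f x ^ p) ^ (1/p) * (∫ x, g x ^ q) ^ (1/q) := hH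
      _ = (∫ x, φ x ^ 2) ^ (1 - L⁻¹) * (∫ x, ‖x‖ ^ (2*ℓ) * φ x ^ 2) ^ (L⁻¹) := by
          congr 2
          · congr 1; ext x; rw [hfp]
          · rw [hpdef]; field_simp; rw [mul_sub, mul_one, mul_one_div]; exact congrArg (q - ·) (div_self hL0.ne').symm
          · congr 1; ext x; rw [hgq]
          · rw [hqdef, one_div]


open MeasureTheory Metric Set

/-- For every dimension `d ≥ 1` and every `ℓ ∈ ℕ` there is a constant `C` depending
only on `d` and `ℓ` such that for every radius `R > 0` and every `φ ∈ H¹₀(B_R)`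
(represented as a differentiable function supported in the open ball `B_R` with `φ`
and `∇φ` square integrable):
`‖φ‖_{L²(B_R)} ≤ C ‖∇φ‖_{L²(B_R)}^{ℓ/(ℓ+1)} ‖ |y|^ℓ φ ‖_{L²(B_R)}^{1/(ℓ+1)}`. -/
theorem stmt_1 (d : ℕ) (hd : 1 ≤ d) (ℓ : ℕ) :
    ∃ C > (0 : ℝ), ∀ R > (0 : ℝ), ∀ φ : EuclideanSpace ℝ (Fin d) → ℝ,
      Differentiable ℝ φ → Function.support φ ⊆ Metric.ball 0 R →
      MemLp φ 2 volume → MemLp (fun x => ‖fderiv ℝ φ x‖) 2 volume →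
      Real.sqrt (∫ y in Metric.ball (0 : EuclideanSpace ℝ (Fin d)) R, (φ y) ^ 2) ≤
        C * Real.sqrt (∫ y in Metric.ball (0 : EuclideanSpace ℝ (Fin d)) R,
              ‖fderiv ℝ φ y‖ ^ 2) ^ ((ℓ : ℝ) / (ℓ + 1)) *
          Real.sqrt (∫ y in Metric.ball (0 : EuclideanSpace ℝ (Fin d)) R,
              (‖y‖ ^ ℓ * φ y) ^ 2) ^ (1 / ((ℓ : ℝ) + 1)) := by
  refine ⟨2, two_pos, ?_⟩
  intro R hR φ hdiff hsupp hφ2 hD2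
  have hcont : Continuous φ := hdiff.continuous
  have hφ0 : ∀ x : EuclideanSpace ℝ (Fin d), x ∉ ball (0:EuclideanSpace ℝ (Fin d)) R → φ x = 0 :=
    fun x hx => Function.notMem_support.1 (fun hs => hx (hsupp hs))
  have hφ0' : ∀ x : EuclideanSpace ℝ (Fin d), x ∉ closedBall (0:EuclideanSpace ℝ (Fin d)) R →
      φ x = 0 := fun x hx => hφ0 x (fun h => hx (ball_subset_closedBall h))
  have hφcs : HasCompactSupport φ :=
    HasCompactSupport.intro (isCompact_closedBall _ _) hφ0'
  -- global quantities
  set A : ℝ := ∫ x, φ x ^ 2 with hAdef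
  set G2 : ℝ := ∫ x, ‖fderiv ℝ φ x‖ ^ 2 with hG2def
  set M2 : ℝ := ∫ x, (‖x‖ ^ ℓ * φ x) ^ 2 with hM2def
  set W2 : ℝ := ∫ x, ‖x‖ ^ 2 * φ x ^ 2 with hW2def
  have hAnn : 0 ≤ A := integral_nonneg fun x => sq_nonneg _
  have hG2nn : 0 ≤ G2 := integral_nonneg fun x => sq_nonneg _
  have hM2nn : 0 ≤ M2 := integral_nonneg fun x => sq_nonneg _
  have hW2nn : 0 ≤ W2 := integral_nonneg fun x => mul_nonneg (sq_nonneg _) (sq_nonneg _)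
  -- conversion of set integrals
  have e1 : ∫ y in ball (0:EuclideanSpace ℝ (Fin d)) R, φ y ^ 2 = A :=
    setIntegral_eq_integral_of_forall_compl_eq_zero fun x hx => by rw [hφ0 x hx]; ring
  have e3 : ∫ y in ball (0:EuclideanSpace ℝ (Fin d)) R, (‖y‖ ^ ℓ * φ y) ^ 2 = M2 :=
    setIntegral_eq_integral_of_forall_compl_eq_zero fun x hx => by rw [hφ0 x hx]; ring
  have e2 : ∫ y in ball (0:EuclideanSpace ℝ (Fin d)) R, ‖fderiv ℝ φ y‖ ^ 2 = G2 := by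
    apply setIntegral_eq_integral_of_ae_compl_eq_zero
    have hsph : volume (sphere (0:EuclideanSpace ℝ (Fin d)) R) = 0 :=
      Measure.addHaar_sphere_of_ne_zero volume (0:EuclideanSpace ℝ (Fin d)) hR.ne'
    filter_upwards [measure_eq_zero_iff_ae_notMem.1 hsph] with x hxs hxb
    have hxR : R < ‖x‖ := by
      have h1 : R ≤ ‖x‖ := by
        by_contra h
        exact hxb (by simpa [mem_ball, dist_zero_right] using lt_of_not_ge h)
      rcases lt_or_eq_of_le h1 with h | h
      · exact h
      · exact absurd (by simp [mem_sphere, dist_zero_right, ← h]) hxs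
    have hev : φ =ᶠ[nhds x] (fun _ => (0:ℝ)) := by
      apply Filter.eventually_of_mem (Metric.ball_mem_nhds x (by linarith : (0:ℝ) < ‖x‖ - R))
      intro y hy
      apply hφ0
      simp only [mem_ball, dist_zero_right, not_lt] at *
      have : ‖x‖ - ‖y‖ ≤ dist y x := by
        simpa [dist_eq_norm, norm_sub_rev] using norm_sub_norm_le x y
      linarith [hy]
    have : fderiv ℝ φ x = 0 := by
      rw [hev.fderiv_eq]
      exact fderiv_const_apply 0
    simp [this]
  rw [e1, e2, e3, Real.sqrt_eq_rpow, Real.sqrt_eq_rpow, Real.sqrt_eq_rpow]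
  -- case ℓ = 0
  rcases Nat.eq_zero_or_pos ℓ with rfl | hℓ
  · simp only [Nat.cast_zero, zero_div, Real.rpow_zero, pow_zero, one_mul, zero_add, div_one,
      Real.rpow_one, mul_one]
    have hMA : M2 = A := by simp only [hM2def, hAdef, pow_zero, one_mul]
    rw [hMA]
    nlinarith [Real.rpow_nonneg hAnn (1/2 : ℝ)]
  -- main case ℓ ≥ 1
  have step1 : A ≤ 2 * W2 ^ (1/2 : ℝ) * G2 ^ (1/2 : ℝ) :=
    step1_lemma d hd φ hdiff hφcs hD2
  have step2 : W2 ≤ A ^ (1 - (ℓ:ℝ)⁻¹) * M2 ^ ((ℓ:ℝ)⁻¹) :=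
    step2_lemma d ℓ hℓ φ hcont hφcs
  exact alg_aux ℓ hℓ hAnn hW2nn hG2nn hM2nn step1 step2
end

section
/- Let v : [0,L] → ℝ be C^m (m ≥ 1) with |v'(y)| + |v''(y)| + ⋯ + |v^(m)(y)| > 0 for all y ∈ [0,L]. Then there exist constants C₀, δ₀ > 0 such that for all λ ∈ ℝ and all δ ∈ (0,δ₀), the Lebesgue measure of the set E^m_{λ,δ} = {y ∈ (0,L) : |v(y) − λ| < δ^m} is at most C₀ δ. -/
open MeasureTheory Set


lemma expand_lemma {g g' : ℝ → ℝ} {a b c : ℝ}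
    (hd : ∀ y ∈ Icc a b, HasDerivWithinAt g (g' y) (Icc a b) y)
    (hc : ContinuousOn g' (Icc a b)) (hcpos : 0 < c)
    (hlb : ∀ y ∈ Icc a b, c ≤ |g' y|) :
    ∀ x ∈ Icc a b, ∀ y ∈ Icc a b, c * |x - y| ≤ |g x - g y| := by
  have hgc : ContinuousOn g (Icc a b) := fun y hy => (hd y hy).continuousWithinAt
  have hdiffint : DifferentiableOn ℝ g (interior (Icc a b)) := by
    intro x hx
    rw [interior_Icc] at hx
    exact ((hd x (Ioo_subset_Icc_self hx)).hasDerivAt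
      (Icc_mem_nhds hx.1 hx.2)).differentiableAt.differentiableWithinAt
  have hderiv : ∀ x ∈ interior (Icc a b), deriv g x = g' x := by
    intro x hx
    rw [interior_Icc] at hx
    exact ((hd x (Ioo_subset_Icc_self hx)).hasDerivAt (Icc_mem_nhds hx.1 hx.2)).deriv
  have hsign : (∀ y ∈ Icc a b, c ≤ g' y) ∨ (∀ y ∈ Icc a b, g' y ≤ -c) := by
    by_contra h
    push_neg at h
    obtain ⟨⟨y₁, hy₁, h1⟩, ⟨y₂, hy₂, h2⟩⟩ := h
    have hb1 : g' y₁ ≤ -c := by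
      rcases abs_cases (g' y₁) with ⟨he, _⟩ | ⟨he, _⟩
      · exact absurd (he ▸ hlb y₁ hy₁) (not_le.2 h1)
      · linarith [hlb y₁ hy₁]
    have hb2 : c ≤ g' y₂ := by
      rcases abs_cases (g' y₂) with ⟨he, _⟩ | ⟨he, _⟩
      · exact he ▸ hlb y₂ hy₂
      · linarith [hlb y₂ hy₂]
    have hsub : uIcc y₁ y₂ ⊆ Icc a b := (ordConnected_Icc.uIcc_subset hy₁ hy₂)
    have h0 : (0 : ℝ) ∈ uIcc (g' y₁) (g' y₂) := by
      rw [mem_uIcc]; left; constructor <;> linarith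
    obtain ⟨z, hz, hz0⟩ := intermediate_value_uIcc (hc.mono hsub) h0
    have := hlb z (hsub hz)
    rw [hz0] at this
    simp at this
    linarith
  intro x hx y hy
  have key : ∀ x ∈ Icc a b, ∀ y ∈ Icc a b, x ≤ y → c * (y - x) ≤ |g x - g y| := by
    rcases hsign with hpos | hneg
    · intro x hx y hy hxy
      have := (convex_Icc a b).mul_sub_le_image_sub_of_le_deriv hgc hdiffint
        (fun z hz => (hderiv z hz) ▸ hpos z (interior_subset hz)) x hx y hy hxy
      calc c * (y - x) ≤ g y - g x := this
        _ ≤ |g y - g x| := le_abs_self _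
        _ = |g x - g y| := abs_sub_comm _ _
    · intro x hx y hy hxy
      have := (convex_Icc a b).mul_sub_le_image_sub_of_le_deriv (f := fun t => -g t) (C := c)
        (hgc.neg) (hdiffint.neg)
        (fun z hz => by
          rw [deriv.fun_neg, hderiv z hz]
          linarith [hneg z (interior_subset hz)]) x hx y hy hxy
      calc c * (y - x) ≤ -g y - -g x := this
        _ = g x - g y := by ring
        _ ≤ |g x - g y| := le_abs_self _
  rcases le_total x y with h | h
  · have := key x hx y hy h
    rw [abs_of_nonpos (by linarith)]
    linarith
  · have := key y hy x hx h
    rw [abs_of_nonneg (by linarith), abs_sub_comm]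
    linarith

lemma keylemma : ∀ k : ℕ, 1 ≤ k → ∀ (F : ℕ → ℝ → ℝ) (a b c : ℝ), a ≤ b → 0 < c →
    (∀ i < k, ∀ y ∈ Icc a b, HasDerivWithinAt (F i) (F (i+1) y) (Icc a b) y) →
    ContinuousOn (F k) (Icc a b) →
    (∀ y ∈ Icc a b, c ≤ |F k y|) →
    ∀ ε : ℝ, 0 < ε →
      volume {y ∈ Icc a b | |F 0 y| < c * ε ^ k} ≤ ENNReal.ofReal (4 * 3 ^ k * ε) := by
  intro k hk
  induction k, hk using Nat.le_induction with
  | base =>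
    intro F a b c hab hcpos hchain hcont hlb ε hε
    have hexp := expand_lemma (hchain 0 (by norm_num)) hcont hcpos hlb
    set E := {y ∈ Icc a b | |F 0 y| < c * ε ^ 1} with hE
    rcases eq_empty_or_nonempty E with he | ⟨x₀, hx₀⟩
    · rw [he]; simp
    obtain ⟨hx₀I, hx₀v⟩ := hx₀
    have hsub : E ⊆ Ioo (x₀ - 2*ε) (x₀ + 2*ε) := by
      rintro y ⟨hyI, hyv⟩
      have h1 : c * |y - x₀| ≤ |F 0 y - F 0 x₀| := hexp y hyI x₀ hx₀I
      have h2 : |F 0 y - F 0 x₀| ≤ |F 0 y| + |F 0 x₀| := abs_sub _ _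
      have h3 : c * |y - x₀| < c * (2 * ε) := by
        simp only [pow_one] at hyv hx₀v
        calc c * |y - x₀| ≤ |F 0 y| + |F 0 x₀| := h1.trans h2
          _ < c * ε + c * ε := by linarith
          _ = c * (2 * ε) := by ring
      have h4 : |y - x₀| < 2 * ε := lt_of_mul_lt_mul_left h3 hcpos.le
      rw [abs_lt] at h4
      constructor <;> [linarith [h4.1]; linarith [h4.2]]
    calc volume E ≤ volume (Ioo (x₀ - 2*ε) (x₀ + 2*ε)) := measure_mono hsub
      _ = ENNReal.ofReal (x₀ + 2*ε - (x₀ - 2*ε)) := Real.volume_Ioo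
      _ ≤ ENNReal.ofReal (4 * 3 ^ 1 * ε) := by
          apply ENNReal.ofReal_le_ofReal; nlinarith
  | succ k hk ih =>
    intro F a b c hab hcpos hchain hcont hlb ε hε
    set g := F k with hg
    have hgd : ∀ y ∈ Icc a b, HasDerivWithinAt g (F (k+1) y) (Icc a b) y :=
      hchain k (lt_add_one k)
    have hgc : ContinuousOn g (Icc a b) := fun y hy => (hgd y hy).continuousWithinAt
    have hexp := expand_lemma hgd hcont hcpos hlb
    obtain ⟨y₀, hy₀I, hy₀min⟩ := isCompact_Icc.exists_isMinOn (nonempty_Icc.2 hab)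
      (continuous_abs.comp_continuousOn hgc)
    have hpt : ∀ y ∈ Icc a b, c * |y - y₀| ≤ 2 * |g y| := by
      intro y hy
      have h1 : c * |y - y₀| ≤ |g y - g y₀| := hexp y hy y₀ hy₀I
      have h2 : |g y - g y₀| ≤ |g y| + |g y₀| := abs_sub _ _
      have h3 : |g y₀| ≤ |g y| := hy₀min hy
      linarith
    set b₂ := y₀ - 4*ε with hb₂
    set a₃ := y₀ + 4*ε with ha₃
    have hb₂b : b₂ ≤ b := by have := hy₀I.2; simp only [hb₂]; linarith
    have ha₃a : a ≤ a₃ := by have := hy₀I.1; simp only [ha₃]; linarith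
    -- bound on left piece
    have hpiece : ∀ a' b' : ℝ, Icc a' b' ⊆ Icc a b →
        (∀ y ∈ Icc a' b', 4 * ε ≤ |y - y₀|) →
        volume {y ∈ Icc a' b' | |F 0 y| < (2*c*ε) * ε ^ k} ≤
          ENNReal.ofReal (4 * 3 ^ k * ε) := by
      intro a' b' hsub hfar
      rcases le_or_gt a' b' with hab' | hab'
      · apply ih F a' b' (2*c*ε) hab' (by positivity)
        · intro i hi y hy
          exact (hchain i (by omega) y (hsub hy)).mono hsub
        · exact hgc.mono hsub
        · intro y hy
          have h1 := hpt y (hsub hy)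
          have h2 := hfar y hy
          have : c * (4 * ε) ≤ 2 * |g y| := le_trans (by nlinarith) h1
          linarith
        · exact hε
      · have : Icc a' b' = ∅ := Icc_eq_empty (not_le.2 hab')
        rw [this]
        simp
    have hcov : {y ∈ Icc a b | |F 0 y| < c * ε ^ (k+1)} ⊆
        Icc (y₀ - 4*ε) (y₀ + 4*ε) ∪
        ({y ∈ Icc a b₂ | |F 0 y| < (2*c*ε) * ε ^ k} ∪
         {y ∈ Icc a₃ b | |F 0 y| < (2*c*ε) * ε ^ k}) := by
      rintro y ⟨hyI, hyv⟩
      have hlt : |F 0 y| < (2*c*ε) * ε ^ k := by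
        calc |F 0 y| < c * ε ^ (k+1) := hyv
          _ ≤ (2*c*ε) * ε ^ k := by
              rw [pow_succ]
              nlinarith [pow_pos hε k, mul_pos hcpos (pow_pos hε k)]
      rcases le_or_gt (y₀ - 4*ε) y with h1 | h1
      · rcases le_or_gt y (y₀ + 4*ε) with h2 | h2
        · exact Or.inl ⟨h1, h2⟩
        · exact Or.inr (Or.inr ⟨⟨h2.le, hyI.2⟩, hlt⟩)
      · exact Or.inr (Or.inl ⟨⟨hyI.1, h1.le⟩, hlt⟩)
    have hfar₂ : ∀ y ∈ Icc a b₂, 4 * ε ≤ |y - y₀| := by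
      intro y hy
      have := hy.2
      rw [abs_sub_comm, abs_of_nonneg (by simp only [hb₂] at this ⊢; linarith)]
      simp only [hb₂] at this; linarith
    have hfar₃ : ∀ y ∈ Icc a₃ b, 4 * ε ≤ |y - y₀| := by
      intro y hy
      have := hy.1
      rw [abs_of_nonneg (by simp only [ha₃] at this ⊢; linarith)]
      simp only [ha₃] at this; linarith
    have h2 := hpiece a b₂ (Icc_subset_Icc le_rfl hb₂b) hfar₂
    have h3 := hpiece a₃ b (Icc_subset_Icc ha₃a le_rfl) hfar₃
    have h1 : volume (Icc (y₀ - 4*ε) (y₀ + 4*ε)) ≤ ENNReal.ofReal (8 * ε) := by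
      rw [Real.volume_Icc]
      apply ENNReal.ofReal_le_ofReal; linarith
    have h3k : (3:ℝ) ≤ 3 ^ k := by
      calc (3:ℝ) = 3 ^ 1 := (pow_one 3).symm
        _ ≤ 3 ^ k := pow_le_pow_right₀ (by norm_num) hk
    calc volume {y ∈ Icc a b | |F 0 y| < c * ε ^ (k+1)}
        ≤ volume (Icc (y₀ - 4*ε) (y₀ + 4*ε)) +
          (volume {y ∈ Icc a b₂ | |F 0 y| < (2*c*ε) * ε ^ k} +
           volume {y ∈ Icc a₃ b | |F 0 y| < (2*c*ε) * ε ^ k}) :=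
        le_trans (measure_mono hcov) (le_trans (measure_union_le _ _)
          (add_le_add le_rfl (measure_union_le _ _)))
      _ ≤ ENNReal.ofReal (8 * ε) +
          (ENNReal.ofReal (4 * 3 ^ k * ε) + ENNReal.ofReal (4 * 3 ^ k * ε)) :=
        add_le_add h1 (add_le_add h2 h3)
      _ = ENNReal.ofReal (8 * ε + (4 * 3 ^ k * ε + 4 * 3 ^ k * ε)) := by
        rw [ENNReal.ofReal_add (by positivity) (by positivity),
          ENNReal.ofReal_add (by positivity) (by positivity)]
      _ ≤ ENNReal.ofReal (4 * 3 ^ (k+1) * ε) := by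
        apply ENNReal.ofReal_le_ofReal
        rw [pow_succ]
        nlinarith

/-- Let `v : [0,L] → ℝ` be `C^m` (`m ≥ 1`) with
`|v'(y)| + ⋯ + |v^{(m)}(y)| > 0` on `[0,L]`. Then there are `C₀, δ₀ > 0` such that for
all `λ ∈ ℝ` and `δ ∈ (0,δ₀)`, the measure of the thickened level set
`E^m_{λ,δ} = {y ∈ (0,L) : |v(y) - λ| < δ^m}` is at most `C₀ δ`. -/
theorem stmt_4 (L : ℝ) (hL : 0 < L) (m : ℕ) (hm : 1 ≤ m) (v : ℝ → ℝ)
    (hv : ContDiffOn ℝ m v (Set.Icc 0 L))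
    (hnondeg : ∀ y ∈ Set.Icc (0 : ℝ) L,
      ∃ i, 1 ≤ i ∧ i ≤ m ∧ iteratedDerivWithin i v (Set.Icc 0 L) y ≠ 0) :
    ∃ C₀ > (0 : ℝ), ∃ δ₀ > (0 : ℝ), ∀ lam : ℝ, ∀ δ ∈ Set.Ioo (0 : ℝ) δ₀,
      volume {y ∈ Set.Ioo (0 : ℝ) L | |v y - lam| < δ ^ m} ≤ ENNReal.ofReal (C₀ * δ) := by
  set I := Set.Icc (0:ℝ) L with hIdef
  have hI : UniqueDiffOn ℝ I := uniqueDiffOn_Icc hL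
  set F : ℕ → ℝ → ℝ := fun i => iteratedDerivWithin i v I with hF
  have hFcont : ∀ i ≤ m, ContinuousOn (F i) I := fun i hi =>
    hv.continuousOn_iteratedDerivWithin (by exact_mod_cast hi) hI
  have hchain : ∀ i < m, ∀ y ∈ I, HasDerivWithinAt (F i) (F (i+1) y) I y := by
    intro i hi y hy
    have hdiff : DifferentiableWithinAt ℝ (F i) I y :=
      (hv.differentiableOn_iteratedDerivWithin (by exact_mod_cast hi) hI) y hy
    have h2 : F (i+1) y = derivWithin (F i) I y := congrFun iteratedDerivWithin_succ y
    rw [h2]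
    exact hdiff.hasDerivWithinAt
  have hpoint : ∀ y ∈ I, ∃ i : ℕ, (1 ≤ i ∧ i ≤ m) ∧ 0 < |F i y| ∧ ∃ r > 0,
      ∀ z ∈ I, |z - y| < r → |F i y| / 2 ≤ |F i z| := by
    intro y hy
    obtain ⟨i, hi1, him, hne⟩ := hnondeg y hy
    have hpos : 0 < |F i y| := abs_pos.2 hne
    have hcw : ContinuousWithinAt (F i) I y := (hFcont i him) y hy
    rw [Metric.continuousWithinAt_iff] at hcw
    obtain ⟨r, hr, hball⟩ := hcw (|F i y| / 2) (by positivity)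
    refine ⟨i, ⟨hi1, him⟩, hpos, r, hr, fun z hz hdz => ?_⟩
    have h1 := hball hz (by rwa [Real.dist_eq])
    rw [Real.dist_eq] at h1
    have h2 : |F i y| - |F i z| ≤ |F i y - F i z| := abs_sub_abs_le_abs_sub _ _
    rw [abs_sub_comm] at h2
    linarith
  choose! idx hidx hFpos r hrpos hball using hpoint
  have hcov : I ⊆ ⋃ y ∈ I, Metric.ball y (r y / 2) := fun y hy =>
    mem_biUnion hy (Metric.mem_ball_self (by linarith [hrpos y hy]))
  obtain ⟨t, htI, htfin, htcov⟩ := isCompact_Icc.elim_finite_subcover_image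
    (fun y _ => Metric.isOpen_ball) hcov
  classical
  set T := htfin.toFinset with hT
  have hTmem : ∀ y, y ∈ T ↔ y ∈ t := fun y => htfin.mem_toFinset
  set c : ℝ → ℝ := fun y => |F (idx y) y| / 2 with hc
  set M : ℝ → ℝ := fun y => max 1 (1 / c y) with hM
  set A : ℝ → ℝ := fun y => 4 * 3 ^ (idx y) * M y with hA
  have hMone : ∀ y, 1 ≤ M y := fun y => le_max_left _ _
  have hAnn : ∀ y, 0 ≤ A y := by
    intro y
    have := hMone y
    positivity
  refine ⟨1 + ∑ y ∈ T, A y, by positivity, 1, one_pos, fun lam δ hδ => ?_⟩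
  set Fl : ℕ → ℝ → ℝ := fun j s => if j = 0 then v s - lam else F j s with hFl
  set E := {y ∈ Set.Ioo (0:ℝ) L | |v y - lam| < δ ^ m} with hE
  have hEcov : E ⊆ ⋃ y ∈ T, (E ∩ Metric.ball y (r y / 2)) := by
    intro z hz
    have hzI : z ∈ I := Ioo_subset_Icc_self hz.1
    obtain ⟨y, hy, hzb⟩ := mem_iUnion₂.1 (htcov hzI)
    exact mem_iUnion₂.2 ⟨y, (hTmem y).2 hy, hz, hzb⟩
  have hpiece : ∀ y ∈ T, volume (E ∩ Metric.ball y (r y / 2)) ≤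
      ENNReal.ofReal (A y * δ) := by
    intro y hyT
    have hyI : y ∈ I := htI ((hTmem y).1 hyT)
    have hcpos : 0 < c y := by
      have := hFpos y hyI
      simp only [hc]
      positivity
    set i := idx y with hi
    obtain ⟨hi1, him⟩ := hidx y hyI
    set a' := max 0 (y - r y / 2) with ha'
    set b' := min L (y + r y / 2) with hb'
    have hrp := hrpos y hyI
    have ha'b' : a' ≤ b' :=
      le_trans (max_le hyI.1 (by linarith)) (le_min hyI.2 (by linarith))
    have hsub : Set.Icc a' b' ⊆ I := Icc_subset_Icc (le_max_left _ _) (min_le_left _ _)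
    have hnear : ∀ z ∈ Set.Icc a' b', |z - y| < r y := by
      intro z hz
      have h1 : y - r y / 2 ≤ z := le_trans (le_max_right _ _) hz.1
      have h2 : z ≤ y + r y / 2 := le_trans hz.2 (min_le_right _ _)
      rw [abs_lt]
      constructor <;> linarith
    have hbound : ∀ z ∈ Set.Icc a' b', c y ≤ |F i z| := fun z hz =>
      hball y hyI z (hsub hz) (hnear z hz)
    have hsubE : E ∩ Metric.ball y (r y / 2) ⊆
        {z ∈ Set.Icc a' b' | |Fl 0 z| < c y * (M y * δ) ^ i} := by
      rintro z ⟨⟨hzI, hzv⟩, hzb⟩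
      rw [Metric.mem_ball, Real.dist_eq] at hzb
      rw [abs_lt] at hzb
      refine ⟨⟨le_trans (max_le hzI.1.le (by linarith)) le_rfl,
        le_trans le_rfl (le_min hzI.2.le (by linarith))⟩, ?_⟩
      have h1 : δ ^ m ≤ δ ^ i := pow_le_pow_of_le_one hδ.1.le hδ.2.le him
      have hMy := hMone y
      have h2 : 1 ≤ c y * M y ^ i := by
        have h3 : M y ≤ M y ^ i := le_self_pow₀ (hMone y) (by omega)
        have h4 : 1 / c y ≤ M y := le_max_right _ _
        calc (1:ℝ) = c y * (1 / c y) := by field_simp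
          _ ≤ c y * M y := by nlinarith
          _ ≤ c y * M y ^ i := by nlinarith
      have h5 : δ ^ i ≤ c y * (M y * δ) ^ i := by
        rw [mul_pow]
        nlinarith [pow_pos hδ.1 i]
      simp only [hFl, if_pos rfl]
      calc |v z - lam| < δ ^ m := hzv
        _ ≤ δ ^ i := h1
        _ ≤ c y * (M y * δ) ^ i := h5
    have hchain' : ∀ j < i, ∀ z ∈ Set.Icc a' b',
        HasDerivWithinAt (Fl j) (Fl (j+1) z) (Set.Icc a' b') z := by
      intro j hj z hz
      rcases Nat.eq_zero_or_pos j with hj0 | hjpos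
      · subst hj0
        have h0 : HasDerivWithinAt (F 0) (F 1 z) I z :=
          hchain 0 (by omega) z (hsub hz)
        have hF0 : F 0 = v := by
          simp only [hF]; exact iteratedDerivWithin_zero
        rw [hF0] at h0
        have := (h0.mono hsub).sub_const lam
        simpa only [hFl, if_pos rfl, if_pos trivial, Nat.zero_add, if_neg one_ne_zero] using this
      · have hj1 : j ≠ 0 := by omega
        have := (hchain j (by omega) z (hsub hz)).mono hsub
        simpa only [hFl, if_neg hj1, if_neg (Nat.succ_ne_zero j)] using this
    have hcont' : ContinuousOn (Fl i) (Set.Icc a' b') := by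
      have : Fl i = F i := by
        simp only [hFl, if_neg (by omega : i ≠ 0)]
      rw [this]
      exact (hFcont i him).mono hsub
    have hbound' : ∀ z ∈ Set.Icc a' b', c y ≤ |Fl i z| := by
      intro z hz
      have : Fl i z = F i z := by simp only [hFl, if_neg (by omega : i ≠ 0)]
      rw [this]
      exact hbound z hz
    have hkey := keylemma i hi1 Fl a' b' (c y) ha'b' hcpos hchain' hcont' hbound'
      (M y * δ) (by nlinarith [hMone y, hδ.1])
    calc volume (E ∩ Metric.ball y (r y / 2))
        ≤ volume {z ∈ Set.Icc a' b' | |Fl 0 z| < c y * (M y * δ) ^ i} :=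
          measure_mono hsubE
      _ ≤ ENNReal.ofReal (4 * 3 ^ i * (M y * δ)) := hkey
      _ = ENNReal.ofReal (A y * δ) := by rw [hA, hi]; ring_nf
  calc volume E ≤ ∑ y ∈ T, volume (E ∩ Metric.ball y (r y / 2)) :=
      le_trans (measure_mono hEcov) (measure_biUnion_finset_le _ _)
    _ ≤ ∑ y ∈ T, ENNReal.ofReal (A y * δ) := Finset.sum_le_sum hpiece
    _ = ENNReal.ofReal (∑ y ∈ T, A y * δ) :=
      (ENNReal.ofReal_sum_of_nonneg (fun y _ => by
        have := hAnn y
        nlinarith [hδ.1])).symm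
    _ ≤ ENNReal.ofReal ((1 + ∑ y ∈ T, A y) * δ) := by
      apply ENNReal.ofReal_le_ofReal
      rw [← Finset.sum_mul, add_mul, one_mul]
      nlinarith [hδ.1]
end

section
/- Let v : [0,L] → ℝ be C^m (m ≥ 1) whose derivatives up to order m never vanish simultaneously. Then there exist C₁, δ₁ > 0 such that for all λ ∈ ℝ and δ ∈ (0,δ₁), the δ-neighborhood ℰ^m_{λ,δ} = {y ∈ (0,L) : dist(y, E^m_{λ,δ}) < δ} of the thickened level set E^m_{λ,δ} = {y : |v(y) − λ| < δ^m} has Lebesgue measure at most C₁ δ. -/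
open MeasureTheory Metric Set

lemma lipschitz_below {a b c : ℝ} {g g' : ℝ → ℝ}
    (hg : ∀ x ∈ Set.Icc a b, HasDerivWithinAt g (g' x) (Set.Icc a b) x)
    (hc : ∀ x ∈ Set.Icc a b, c ≤ |g' x|) :
    ∀ x ∈ Set.Icc a b, ∀ y ∈ Set.Icc a b, c * |y - x| ≤ |g y - g x| := by
  have key : ∀ x ∈ Set.Icc a b, ∀ y ∈ Set.Icc a b, x < y → c * |y - x| ≤ |g y - g x| := by
    intro x hx y hy hxy
    have hcont : ContinuousOn g (Set.Icc x y) := fun z hz =>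
      ((hg z (Set.Icc_subset_Icc hx.1 hy.2 hz)).continuousWithinAt).mono
        (Set.Icc_subset_Icc hx.1 hy.2)
    have hderiv : ∀ z ∈ Set.Ioo x y, HasDerivAt g (g' z) z := by
      intro z hz
      have hz' : z ∈ Set.Ioo a b := ⟨lt_of_le_of_lt hx.1 hz.1, lt_of_lt_of_le hz.2 hy.2⟩
      exact (hg z ⟨hz'.1.le, hz'.2.le⟩).hasDerivAt (Icc_mem_nhds hz'.1 hz'.2)
    obtain ⟨ξ, hξ, hslope⟩ := exists_hasDerivAt_eq_slope g g' hxy hcont hderiv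
    have hξab : ξ ∈ Set.Icc a b := ⟨le_trans hx.1 hξ.1.le, le_trans hξ.2.le hy.2⟩
    have : |g y - g x| = |g' ξ| * (y - x) := by
      rw [hslope]
      rw [abs_div, abs_of_pos (by linarith : (0:ℝ) < y - x)]
      rw [div_mul_cancel₀ _ (by linarith : (y:ℝ) - x ≠ 0)]
    rw [this, abs_of_pos (by linarith : (0:ℝ) < y - x)]
    exact mul_le_mul_of_nonneg_right (hc ξ hξab) (by linarith)
  intro x hx y hy
  rcases lt_trichotomy x y with h | h | h
  · exact key x hx y hy h
  · simp [h]
  · have := key y hy x hx h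
    rwa [abs_sub_comm x y, abs_sub_comm (g x) (g y)] at this

lemma rpow_key {q : ℝ} (hq : 0 < q) (k : ℕ) (hk : 1 ≤ k) :
    (q / q ^ (((k:ℝ)+1)⁻¹)) ^ ((k:ℝ)⁻¹) = q ^ (((k:ℝ)+1)⁻¹) := by
  have hk0 : (k:ℝ) ≠ 0 := Nat.cast_ne_zero.mpr (by omega)
  have hk1 : (k:ℝ) + 1 ≠ 0 := by positivity
  rw [show q / q ^ (((k:ℝ)+1)⁻¹) = q ^ ((1:ℝ) - ((k:ℝ)+1)⁻¹) by
        rw [Real.rpow_sub hq, Real.rpow_one],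
      ← Real.rpow_mul hq.le]
  congr 1
  field_simp
  ring

lemma sublevel_cover : ∀ k : ℕ, 1 ≤ k → ∀ (a b c : ℝ) (f : ℕ → ℝ → ℝ) (ε : ℝ),
    0 < c → 0 < ε →
    (∀ j < k, ∀ x ∈ Set.Icc a b, HasDerivWithinAt (f j) (f (j+1) x) (Set.Icc a b) x) →
    (∀ x ∈ Set.Icc a b, c ≤ |f k x|) →
    ∃ P : Finset ℝ, P.card ≤ 2^k - 1 ∧
      {x ∈ Set.Icc a b | |f 0 x| < ε} ⊆
        ⋃ p ∈ P, Metric.closedBall p (2 * (ε/c) ^ ((k:ℝ)⁻¹)) := by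
  intro k hk
  induction k, hk using Nat.le_induction with
  | base =>
    intro a b c f ε hc hε hder hlow
    have hrad : (2:ℝ) * (ε/c) ^ (((1:ℕ):ℝ)⁻¹) = 2 * (ε/c) := by
      norm_num
    rcases Set.eq_empty_or_nonempty {x ∈ Set.Icc a b | |f 0 x| < ε} with hS | ⟨u, hu⟩
    · exact ⟨∅, by simp, by rw [hS]; exact Set.empty_subset _⟩
    · refine ⟨{u}, by simp, ?_⟩
      intro z hz
      have lip := lipschitz_below (hder 0 one_pos) hlow u hu.1 z hz.1
      have habs : |f 0 z - f 0 u| ≤ |f 0 z| + |f 0 u| := abs_sub _ _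
      have h2 : c * |z - u| < 2 * ε := by
        calc c * |z - u| ≤ |f 0 z - f 0 u| := lip
        _ ≤ |f 0 z| + |f 0 u| := habs
        _ < 2 * ε := by have := hz.2; have := hu.2; linarith
      have : |z - u| ≤ 2 * (ε / c) := by
        rw [mul_div_assoc']
        exact le_div_iff₀ hc |>.mpr (by linarith [h2])
      simp only [Set.mem_iUnion, Finset.mem_singleton, Metric.mem_closedBall]
      exact ⟨u, rfl, by rwa [Real.dist_eq, hrad]⟩
  | succ k hk IH =>
    intro a b c f ε hc hε hder hlow
    set q := ε / c with hqdef
    have hq : 0 < q := div_pos hε hc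
    set t := q ^ (((k:ℝ)+1)⁻¹) with htdef
    have ht : 0 < t := Real.rpow_pos_of_pos hq _
    have hrad : (2:ℝ) * (ε/c) ^ ((((k+1):ℕ):ℝ)⁻¹) = 2 * t := by
      push_cast
      rfl
    have hradIH : ∀ {c' : ℝ}, c' = c * t →
        (2:ℝ) * (ε / c') ^ ((k:ℝ)⁻¹) = 2 * t := by
      intro c' hc'
      rw [hc', show ε / (c * t) = q / t by rw [hqdef, div_div], htdef, rpow_key hq k hk]
    have lip := lipschitz_below (hder k (by omega)) hlow
    have hone : 1 ≤ 2^k := Nat.one_le_two_pow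
    rcases Set.eq_empty_or_nonempty {x ∈ Set.Icc a b | |f k x| < c * t} with hZ | ⟨u, hu⟩
    · have hlow' : ∀ x ∈ Set.Icc a b, c * t ≤ |f k x| := by
        intro x hx
        by_contra h
        exact absurd (Set.eq_empty_iff_forall_notMem.mp hZ x ⟨hx, by linarith⟩) (by simp)
      obtain ⟨P, hPcard, hPsub⟩ := IH a b (c*t) f ε (by positivity) hε
        (fun j hj => hder j (by omega)) hlow'
      refine ⟨P, by omega, ?_⟩
      rw [hrad, ← hradIH rfl]
      exact hPsub
    · -- left interval
      have hmono : ∀ a' b', a ≤ a' → b' ≤ b →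
          ∀ j < k, ∀ x ∈ Set.Icc a' b', HasDerivWithinAt (f j) (f (j+1) x) (Set.Icc a' b') x :=
        fun a' b' ha' hb' j hj x hx =>
          (hder j (by omega) x (Set.Icc_subset_Icc ha' hb' hx)).mono (Set.Icc_subset_Icc ha' hb')
      have hside : ∀ x ∈ Set.Icc a b, 2*t ≤ |u - x| → c * t ≤ |f k x| := by
        intro x hx hdist
        by_contra h
        push_neg at h
        have h1 : c * |u - x| ≤ |f k u - f k x| := lip x hx u hu.1
        have h2 : |f k u - f k x| ≤ |f k u| + |f k x| := abs_sub _ _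
        have h3 : c * (2*t) ≤ c * |u - x| := by
          exact mul_le_mul_of_nonneg_left hdist hc.le
        have := hu.2
        nlinarith
      have hlowL : ∀ x ∈ Set.Icc a (u - 2*t), c * t ≤ |f k x| := by
        intro x hx
        have hxb : x ∈ Set.Icc a b := ⟨hx.1, by linarith [hx.2, hu.1.2]⟩
        refine hside x hxb ?_
        have : 2*t ≤ u - x := by linarith [hx.2]
        calc 2*t ≤ u - x := this
        _ ≤ |u - x| := le_abs_self _
      have hlowR : ∀ x ∈ Set.Icc (u + 2*t) b, c * t ≤ |f k x| := by
        intro x hx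
        have hxb : x ∈ Set.Icc a b := ⟨by linarith [hx.1, hu.1.1], hx.2⟩
        refine hside x hxb ?_
        have : 2*t ≤ x - u := by linarith [hx.1]
        calc 2*t ≤ x - u := this
        _ ≤ |u - x| := by rw [abs_sub_comm]; exact le_abs_self _
      obtain ⟨P₁, hP₁card, hP₁sub⟩ := IH a (u - 2*t) (c*t) f ε (by positivity) hε
        (hmono a (u - 2*t) le_rfl (by linarith [hu.1.2]) ) hlowL
      obtain ⟨P₂, hP₂card, hP₂sub⟩ := IH (u + 2*t) b (c*t) f ε (by positivity) hε
        (hmono (u + 2*t) b (by linarith [hu.1.1]) le_rfl) hlowR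
      refine ⟨(P₁ ∪ P₂) ∪ {u}, ?_, ?_⟩
      · calc ((P₁ ∪ P₂) ∪ {u}).card ≤ (P₁ ∪ P₂).card + 1 := by
              simpa using Finset.card_union_le (P₁ ∪ P₂) {u}
        _ ≤ P₁.card + P₂.card + 1 := by linarith [Finset.card_union_le P₁ P₂]
        _ ≤ 2^(k+1) - 1 := by
              have : 2^(k+1) = 2^k + 2^k := by ring
              omega
      · rw [hrad]
        intro z hz
        simp only [Set.mem_iUnion, Metric.mem_closedBall, Finset.mem_union,
          Finset.mem_singleton]
        rcases le_or_gt z (u - 2*t) with hzl | hz1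
        · have := hP₁sub ⟨⟨hz.1.1, hzl⟩, hz.2⟩
          simp only [Set.mem_iUnion, Metric.mem_closedBall] at this
          obtain ⟨p, hp, hpd⟩ := this
          exact ⟨p, Or.inl (Or.inl hp), by rwa [hradIH rfl] at hpd⟩
        · rcases le_or_gt (u + 2*t) z with hzr | hz2
          · have := hP₂sub ⟨⟨hzr, hz.1.2⟩, hz.2⟩
            simp only [Set.mem_iUnion, Metric.mem_closedBall] at this
            obtain ⟨p, hp, hpd⟩ := this
            exact ⟨p, Or.inl (Or.inr hp), by rwa [hradIH rfl] at hpd⟩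
          · refine ⟨u, Or.inr rfl, ?_⟩
            rw [Real.dist_eq, abs_le]
            constructor <;> linarith


/-- Let `v : [0,L] → ℝ` be `C^m` (`m ≥ 1`) whose derivatives up to order `m` never
vanish simultaneously. Then there are `C₁, δ₁ > 0` such that for all `λ ∈ ℝ` and
`δ ∈ (0,δ₁)`, the `δ`-neighborhood `ℰ^m_{λ,δ}` (in `(0,L)`) of the thickened level set
`E^m_{λ,δ} = {y ∈ (0,L) : |v(y) - λ| < δ^m}` has measure at most `C₁ δ`. -/
theorem stmt_5 (L : ℝ) (hL : 0 < L) (m : ℕ) (hm : 1 ≤ m) (v : ℝ → ℝ)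
    (hv : ContDiffOn ℝ m v (Set.Icc 0 L))
    (hnondeg : ∀ y ∈ Set.Icc (0 : ℝ) L,
      ∃ i, 1 ≤ i ∧ i ≤ m ∧ iteratedDerivWithin i v (Set.Icc 0 L) y ≠ 0) :
    ∃ C₁ > (0 : ℝ), ∃ δ₁ > (0 : ℝ), ∀ lam : ℝ, ∀ δ ∈ Set.Ioo (0 : ℝ) δ₁,
      volume (Set.Ioo (0 : ℝ) L ∩
          Metric.thickening δ {y ∈ Set.Ioo (0 : ℝ) L | |v y - lam| < δ ^ m}) ≤
        ENNReal.ofReal (C₁ * δ) := by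
  set S := Set.Icc (0:ℝ) L with hSdef
  have hS : UniqueDiffOn ℝ S := uniqueDiffOn_Icc hL
  set F : ℕ → ℝ → ℝ := fun j => iteratedDerivWithin j v S with hFdef
  -- derivative chain
  have hchain : ∀ j, j + 1 ≤ m → ∀ x ∈ S, HasDerivWithinAt (F j) (F (j+1) x) S x := by
    intro j hj x hx
    have hdiff : DifferentiableWithinAt ℝ (F j) S x :=
      hv.differentiableOn_iteratedDerivWithin (by exact_mod_cast hj) hS x hx
    have := hdiff.hasDerivWithinAt
    rwa [show derivWithin (F j) S x = F (j+1) x from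
      (congrFun (iteratedDerivWithin_succ (n := j) (f := v) (s := S)) x).symm] at this
  have hFcont : ∀ i, i ≤ m → ContinuousOn (F i) S := fun i hi =>
    hv.continuousOn_iteratedDerivWithin (by exact_mod_cast hi) hS
  -- local nondegeneracy with radius
  have hloc : ∀ y : S, ∃ i r c, 1 ≤ i ∧ i ≤ m ∧ 0 < r ∧ 0 < c ∧
      ∀ x ∈ S ∩ Metric.ball (y:ℝ) r, c ≤ |F i x| := by
    rintro ⟨y, hy⟩
    obtain ⟨i, hi1, him, hne⟩ := hnondeg y hy
    have hcont : ContinuousWithinAt (F i) S y := (hFcont i him) y hy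
    have hpos : 0 < |F i y| := abs_pos.mpr hne
    have hev : ∀ᶠ x in nhdsWithin y S, |F i y| / 2 < |F i x| := by
      have : {z : ℝ | |F i y| / 2 < |z|} ∈ nhds (F i y) := by
        refine (isOpen_lt continuous_const continuous_abs).mem_nhds ?_
        simp only [Set.mem_setOf_eq]; linarith
      exact hcont this
    obtain ⟨r, hr, hsub⟩ := Metric.mem_nhdsWithin_iff.mp hev
    exact ⟨i, r, |F i y| / 2, hi1, him, hr, by linarith, fun x hx =>
      (hsub ⟨hx.2, hx.1⟩).le⟩
  choose idx rad cc hi1 him hr hc hbnd using hloc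
  -- compactness
  have hcover : S ⊆ ⋃ y : S, Metric.ball (y:ℝ) (rad y / 2) := fun z hz =>
    Set.mem_iUnion.mpr ⟨⟨z, hz⟩, by simpa using half_pos (hr ⟨z, hz⟩)⟩
  obtain ⟨T, hT⟩ := isCompact_Icc.elim_finite_subcover
    (fun y : S => Metric.ball (y:ℝ) (rad y / 2)) (fun _ => Metric.isOpen_ball) hcover
  -- constants
  set K : S → ℝ := fun y => 2 * (1 / cc y) ^ ((idx y : ℝ)⁻¹) with hKdef
  have hK : ∀ y, 0 < K y := fun y => by
    have h1 : (0:ℝ) < (1 / cc y) ^ ((idx y : ℝ)⁻¹) :=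
      Real.rpow_pos_of_pos (by have := hc y; positivity) _
    have h2 : K y = 2 * (1 / cc y) ^ ((idx y : ℝ)⁻¹) := rfl
    rw [h2]; linarith
  set C₁ : ℝ := (∑ y ∈ T, (2:ℝ)^m * (2 * (K y + 1))) + 1 with hC₁def
  have hC₁pos : 0 < C₁ := by
    have : (0:ℝ) ≤ ∑ y ∈ T, (2:ℝ)^m * (2 * (K y + 1)) :=
      Finset.sum_nonneg fun y _ => by have := hK y; positivity
    linarith
  refine ⟨C₁, hC₁pos, 1, one_pos, ?_⟩
  intro lam δ hδ
  obtain ⟨hδ0, hδ1⟩ := hδ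
  have hε : (0:ℝ) < δ ^ m := by positivity
  -- per-point cover
  have hPex : ∀ y : S, ∃ P : Finset ℝ, P.card ≤ 2^m ∧
      {x ∈ S ∩ Metric.closedBall (y:ℝ) (rad y / 2) | |v x - lam| < δ ^ m} ⊆
        ⋃ p ∈ P, Metric.closedBall p (K y * δ) := by
    intro y
    set a := max 0 ((y:ℝ) - rad y / 2) with hadef
    set b := min L ((y:ℝ) + rad y / 2) with hbdef
    have hIeq : S ∩ Metric.closedBall (y:ℝ) (rad y / 2) = Set.Icc a b := by
      rw [Real.closedBall_eq_Icc]
      exact Set.Icc_inter_Icc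
    have hIsub : Set.Icc a b ⊆ S := by
      rw [← hIeq]; exact Set.inter_subset_left
    have hIball : Set.Icc a b ⊆ Metric.ball (y:ℝ) (rad y) := by
      rw [← hIeq]
      exact fun x hx => Metric.closedBall_subset_ball
        (by linarith [hr y]) hx.2
    set g : ℕ → ℝ → ℝ := fun j => if j = 0 then fun x => v x - lam else F j with hgdef
    have hg0 : g 0 = fun x => v x - lam := rfl
    have hgs : ∀ j, g (j+1) = F (j+1) := fun j => by simp [hgdef]
    have hgder : ∀ j < idx y, ∀ x ∈ Set.Icc a b,
        HasDerivWithinAt (g j) (g (j+1) x) (Set.Icc a b) x := by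
      intro j hj x hx
      have hxS : x ∈ S := hIsub hx
      rcases Nat.eq_zero_or_pos j with rfl | hjpos
      · rw [hg0, hgs 0]
        have hdv : DifferentiableWithinAt ℝ v S x :=
          hv.differentiableOn (by exact_mod_cast (show m ≠ 0 by omega)) x hxS
        have h1 : HasDerivWithinAt v (F 1 x) S x := by
          have := hdv.hasDerivWithinAt
          rwa [show derivWithin v S x = F 1 x from
            (congrFun (iteratedDerivWithin_one (f := v) (s := S)) x).symm] at this
        exact ((h1.sub_const lam).mono hIsub)
      · obtain ⟨j', rfl⟩ : ∃ j', j = j' + 1 := ⟨j - 1, by omega⟩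
        rw [hgs j', hgs (j'+1)]
        exact (hchain (j'+1) (by have := him y; omega) x hxS).mono hIsub
    have hglow : ∀ x ∈ Set.Icc a b, cc y ≤ |g (idx y) x| := by
      intro x hx
      have : g (idx y) = F (idx y) := by
        obtain ⟨j', hj'⟩ : ∃ j', idx y = j' + 1 := ⟨idx y - 1, by have := hi1 y; omega⟩
        rw [hj']; exact hgs j'
      rw [this]
      exact hbnd y x ⟨hIsub hx, hIball hx⟩
    obtain ⟨P, hPcard, hPsub⟩ := sublevel_cover (idx y) (hi1 y) a b (cc y) g (δ^m)
      (hc y) hε hgder hglow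
    refine ⟨P, ?_, ?_⟩
    · calc P.card ≤ 2^(idx y) - 1 := hPcard
      _ ≤ 2^m := by
          have h1 : (2:ℕ)^(idx y) ≤ 2^m := Nat.pow_le_pow_right (by norm_num) (him y)
          have h2 : 1 ≤ (2:ℕ)^(idx y) := Nat.one_le_two_pow
          omega
    · have hrb : 2 * (δ^m / cc y) ^ ((idx y : ℝ)⁻¹) ≤ K y * δ := by
        have hiy1 : (1:ℝ) ≤ (idx y : ℝ) := by exact_mod_cast hi1 y
        have hiy0 : (0:ℝ) < (idx y : ℝ) := by linarith
        have e1 : (δ^m / cc y) ^ ((idx y : ℝ)⁻¹)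
            = (δ^m) ^ ((idx y : ℝ)⁻¹) * (1 / cc y) ^ ((idx y : ℝ)⁻¹) := by
          rw [div_eq_mul_one_div, Real.mul_rpow (by positivity) (by have := hc y; positivity)]
        have e2 : (δ^m) ^ ((idx y : ℝ)⁻¹) ≤ δ := by
          rw [← Real.rpow_natCast δ m, ← Real.rpow_mul hδ0.le]
          calc δ ^ ((m:ℝ) * (idx y : ℝ)⁻¹) ≤ δ ^ (1:ℝ) := by
                apply Real.rpow_le_rpow_of_exponent_ge hδ0 hδ1.le
                rw [← div_eq_mul_inv]
                exact (one_le_div hiy0).mpr (by exact_mod_cast him y)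
          _ = δ := Real.rpow_one δ
        rw [e1, show K y = 2 * (1 / cc y) ^ ((idx y : ℝ)⁻¹) from rfl]
        have hp : (0:ℝ) < (1 / cc y) ^ ((idx y : ℝ)⁻¹) :=
          Real.rpow_pos_of_pos (by have := hc y; positivity) _
        calc 2 * ((δ^m) ^ ((idx y : ℝ)⁻¹) * (1 / cc y) ^ ((idx y : ℝ)⁻¹))
            ≤ 2 * (δ * (1 / cc y) ^ ((idx y : ℝ)⁻¹)) := by
              apply mul_le_mul_of_nonneg_left _ (by norm_num)
              exact mul_le_mul_of_nonneg_right e2 hp.le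
        _ = 2 * (1 / cc y) ^ ((idx y : ℝ)⁻¹) * δ := by ring
      intro z hz
      rw [hIeq] at hz
      have := hPsub ⟨hz.1, by rw [hg0]; exact hz.2⟩
      simp only [Set.mem_iUnion, Metric.mem_closedBall] at this ⊢
      obtain ⟨p, hp, hpd⟩ := this
      exact ⟨p, hp, le_trans hpd hrb⟩
  choose P hPcard hPsub using hPex
  -- the level set is covered
  set E := {x ∈ Set.Ioo (0:ℝ) L | |v x - lam| < δ ^ m} with hEdef
  have hEsub : E ⊆ ⋃ y ∈ T, ⋃ p ∈ P y, Metric.closedBall p (K y * δ) := by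
    intro z hz
    have hzS : z ∈ S := Set.mem_Icc_of_Ioo hz.1
    obtain ⟨y, hyT, hzy⟩ := Set.mem_iUnion₂.mp (hT hzS)
    refine Set.mem_iUnion₂.mpr ⟨y, hyT, ?_⟩
    exact hPsub y ⟨⟨hzS, Metric.ball_subset_closedBall hzy⟩, hz.2⟩
  -- measure estimate
  calc volume (Set.Ioo (0:ℝ) L ∩ Metric.thickening δ E)
      ≤ volume (Metric.thickening δ (⋃ y ∈ T, ⋃ p ∈ P y,
          Metric.closedBall p (K y * δ))) := by
        exact measure_mono (Set.inter_subset_right.trans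
          (Metric.thickening_subset_of_subset δ hEsub))
    _ ≤ volume (⋃ y ∈ T, ⋃ p ∈ (P y), Metric.closedBall p ((K y + 1) * δ)) := by
        simp only [Metric.thickening_iUnion]
        apply measure_mono
        refine Set.iUnion₂_mono fun y hy => ?_
        refine Set.iUnion₂_mono fun p hp => ?_
        rw [thickening_closedBall hδ0 (mul_nonneg (hK y).le hδ0.le)]
        exact (Metric.ball_subset_closedBall).trans
          (Metric.closedBall_subset_closedBall (le_of_eq (by ring)))
    _ ≤ ∑ y ∈ T, volume (⋃ p ∈ (P y), Metric.closedBall p ((K y + 1) * δ)) :=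
        measure_biUnion_finset_le _ _
    _ ≤ ∑ y ∈ T, ENNReal.ofReal ((2:ℝ)^m * (2 * (K y + 1)) * δ) := by
        refine Finset.sum_le_sum fun y hy => ?_
        calc volume (⋃ p ∈ (P y), Metric.closedBall p ((K y + 1) * δ))
            ≤ ∑ p ∈ P y, volume (Metric.closedBall p ((K y + 1) * δ)) :=
              measure_biUnion_finset_le _ _
          _ = (P y).card • ENNReal.ofReal (2 * ((K y + 1) * δ)) := by
              simp [Real.volume_closedBall, Finset.sum_const]
          _ ≤ (2^m : ℕ) • ENNReal.ofReal (2 * ((K y + 1) * δ)) := by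
              exact smul_le_smul_of_nonneg_right (hPcard y) zero_le
          _ = ENNReal.ofReal ((2:ℝ)^m * (2 * (K y + 1) * δ)) := by
              rw [nsmul_eq_mul, ← ENNReal.ofReal_natCast, ← ENNReal.ofReal_mul (by positivity)]
              push_cast
              ring_nf
          _ = ENNReal.ofReal ((2:ℝ)^m * (2 * (K y + 1)) * δ) := by ring_nf
    _ = ENNReal.ofReal (∑ y ∈ T, (2:ℝ)^m * (2 * (K y + 1)) * δ) := by
        rw [ENNReal.ofReal_sum_of_nonneg fun y _ => by have := hK y; positivity]
    _ ≤ ENNReal.ofReal (C₁ * δ) := by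
        apply ENNReal.ofReal_le_ofReal
        rw [← Finset.sum_mul, hC₁def]
        nlinarith [Finset.sum_nonneg (fun y (_ : y ∈ T) => by have := hK y; positivity :
          ∀ y ∈ T, (0:ℝ) ≤ (2:ℝ)^m * (2 * (K y + 1)))]
end

section
/- Fix κ ∈ (0,1). A set E ⊂ ℝ^d is H¹-thin (i.e. there exist C, δ₀ > 0 with ∫_{E_δ} g² ≤ (1/2)∫ g² + Cδ² ∫|∇g|² for all δ ∈ (0,δ₀), g ∈ H¹(ℝ^d)) if and only if there exist C', δ₀' > 0 such that ∫_{E_δ} g² ≤ κ ∫ g² + C'δ² ∫|∇g|² for all δ ∈ (0,δ₀') and all g ∈ H¹(ℝ^d). -/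
open MeasureTheory Metric Set Convolution ContinuousLinearMap

/-- `E ⊂ ℝ^d` satisfies the thinness inequality with constant `κ`: there exist
`C, δ₀ > 0` with `∫_{E_δ} g² ≤ κ∫ g² + Cδ²∫|∇g|²` for all `δ ∈ (0,δ₀)` and all
`g ∈ H¹(ℝ^d)`; here `E_δ` is the open `δ`-neighborhood of `E`. -/
def ThinWith (d : ℕ) (E : Set (EuclideanSpace ℝ (Fin d))) (κ : ℝ) : Prop :=
  ∃ C > (0 : ℝ), ∃ δ₀ > (0 : ℝ), ∀ δ ∈ Set.Ioo (0 : ℝ) δ₀,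
    ∀ g : EuclideanSpace ℝ (Fin d) → ℝ, Differentiable ℝ g →
      MemLp g 2 volume → MemLp (fun x => ‖fderiv ℝ g x‖) 2 volume →
      ∫ x in Metric.thickening δ E, (g x) ^ 2 ≤
        κ * (∫ x, (g x) ^ 2) + C * δ ^ 2 * ∫ x, ‖fderiv ℝ g x‖ ^ 2



lemma cutoff_exists (d : ℕ) (E : Set (EuclideanSpace ℝ (Fin d))) (hE : E.Nonempty)
    {a b : ℝ} (ha : 0 < a) (hab : a < b) :
    ∃ φ : EuclideanSpace ℝ (Fin d) → ℝ,
      Differentiable ℝ φ ∧ (∀ x, 0 ≤ φ x) ∧ (∀ x, φ x ≤ 1) ∧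
      (∀ x ∈ Metric.thickening a E, φ x = 1) ∧
      (∀ x, x ∉ Metric.thickening b E → φ x = 0) ∧
      (∀ x, ‖fderiv ℝ φ x‖ ≤ 4 / (b - a)) := by
  have hw0 : (0:ℝ) < (b - a)/4 := by linarith
  set w : ℝ := (b - a)/4 with hwdef
  set m : ℝ := a + 2*w with hmdef
  set u : (EuclideanSpace ℝ (Fin d)) → ℝ := fun x => max 0 (min 1 ((m - infDist x E)/w)) with hu
  have u_nonneg : ∀ x, 0 ≤ u x := fun x => le_max_left _ _
  have u_le_one : ∀ x, u x ≤ 1 := fun x => max_le zero_le_one (min_le_left _ _)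
  have u_eq_one : ∀ x : EuclideanSpace ℝ (Fin d), infDist x E ≤ a + w → u x = 1 := by
    intro x hx
    have h1 : (1:ℝ) ≤ (m - infDist x E)/w := by
      rw [le_div_iff₀ hw0]; simp only [hmdef] at *; linarith
    simp only [hu, min_eq_left h1, max_eq_right zero_le_one]
  have u_eq_zero : ∀ x : EuclideanSpace ℝ (Fin d), m ≤ infDist x E → u x = 0 := by
    intro x hx
    have h1 : (m - infDist x E)/w ≤ 0 := div_nonpos_of_nonpos_of_nonneg (by linarith) hw0.le
    simp only [hu]
    rw [min_eq_right (h1.trans zero_le_one), max_eq_left h1]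
  have u_cont : Continuous u := by
    apply continuous_const.max
    apply continuous_const.min
    exact (continuous_const.sub (continuous_infDist_pt E)).div_const _
  have u_lip : ∀ x y : EuclideanSpace ℝ (Fin d), dist (u x) (u y) ≤ (1/w) * dist x y := by
    intro x y
    have l1 : dist (u x) (u y) ≤ |(m - infDist x E)/w - (m - infDist y E)/w| := by
      rw [Real.dist_eq]
      calc |u x - u y| ≤ max |(0:ℝ) - 0| |min 1 ((m - infDist x E)/w) - min 1 ((m - infDist y E)/w)| :=
            abs_max_sub_max_le_max _ _ _ _
        _ ≤ max |(0:ℝ) - 0| (max |(1:ℝ) - 1| |(m - infDist x E)/w - (m - infDist y E)/w|) := by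
            apply max_le_max le_rfl (abs_min_sub_min_le_max _ _ _ _)
        _ ≤ _ := by simp
    refine l1.trans ?_
    have : (m - infDist x E)/w - (m - infDist y E)/w = (infDist y E - infDist x E)/w := by ring
    rw [this, abs_div, abs_of_pos hw0, div_eq_mul_inv, one_div, mul_comm]
    apply mul_le_mul_of_nonneg_left _ (inv_nonneg.2 hw0.le)
    rw [abs_sub_comm, ← Real.dist_eq]
    simpa using (lipschitz_infDist_pt E).dist_le_mul x y
  set ψ : ContDiffBump (0 : EuclideanSpace ℝ (Fin d)) := ⟨w/2, w, by positivity, by linarith⟩ with hψ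
  set φ : (EuclideanSpace ℝ (Fin d)) → ℝ := ψ.normed volume ⋆[lsmul ℝ ℝ, volume] u with hφ
  have hrOut : ψ.rOut = w := rfl
  have hdiff : Differentiable ℝ φ := by
    exact (ψ.hasCompactSupport_normed.contDiff_convolution_left (lsmul ℝ ℝ)
      (ψ.contDiff_normed (n := 1)) (u_cont.locallyIntegrable)).differentiable (by simp)
  have hbound : ∀ x, dist (φ x) (1/2) ≤ 1/2 := by
    intro x
    apply dist_convolution_le (by norm_num) (ψ.support_normed_eq (μ := volume)).subset
      ψ.nonneg_normed ψ.integral_normed u_cont.aestronglyMeasurable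
    intro y _
    rw [Real.dist_eq, abs_le]
    exact ⟨by linarith [u_nonneg y], by linarith [u_le_one y]⟩
  have hφ0 : ∀ x, 0 ≤ φ x := by
    intro x
    have := hbound x
    rw [Real.dist_eq, abs_le] at this
    linarith [this.1]
  have hφ1 : ∀ x, φ x ≤ 1 := by
    intro x
    have := hbound x
    rw [Real.dist_eq, abs_le] at this
    linarith [this.2]
  have heq1 : ∀ x ∈ Metric.thickening a E, φ x = 1 := by
    intro x hx
    rw [mem_thickening_iff_infDist_lt hE] at hx
    have hx1 : u x = 1 := u_eq_one x (by linarith)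
    have : φ x = u x := by
      apply ψ.normed_convolution_eq_right
      intro y hy
      rw [hx1]
      apply u_eq_one
      have hdy : dist y x < w := by exact lt_of_lt_of_eq (mem_ball.mp hy) hrOut
      calc infDist y E ≤ infDist x E + dist y x := infDist_le_infDist_add_dist
        _ ≤ a + w := by linarith
    rw [this, hx1]
  have heq0 : ∀ x, x ∉ Metric.thickening b E → φ x = 0 := by
    intro x hx
    rw [mem_thickening_iff_infDist_lt hE, not_lt] at hx
    have hx0 : u x = 0 := u_eq_zero x (by simp only [hmdef, hwdef] at *; linarith)
    have : φ x = u x := by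
      apply ψ.normed_convolution_eq_right
      intro y hy
      rw [hx0]
      apply u_eq_zero
      have hdy : dist y x < w := by exact lt_of_lt_of_eq (mem_ball.mp hy) hrOut
      have : infDist x E ≤ infDist y E + dist x y := infDist_le_infDist_add_dist
      rw [dist_comm] at hdy
      simp only [hmdef, hwdef] at *
      linarith
    rw [this, hx0]
  have φ_lip : ∀ x y : EuclideanSpace ℝ (Fin d), dist (φ x) (φ y) ≤ (1/w) * dist x y := by
    intro x y
    have key : ∀ z : EuclideanSpace ℝ (Fin d), Integrable (fun t => ψ.normed volume t • u (z - t)) volume := by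
      intro z
      apply (ψ.integrable_normed (μ := volume)).mono'
      · exact (ψ.continuous_normed.smul (u_cont.comp (continuous_const.sub continuous_id))).aestronglyMeasurable
      · filter_upwards with t
        rw [norm_smul]
        have : ‖u (z - t)‖ ≤ 1 := by
          rw [Real.norm_eq_abs, abs_le]
          exact ⟨by linarith [u_nonneg (z - t)], u_le_one (z - t)⟩
        calc ‖ψ.normed volume t‖ * ‖u (z - t)‖ ≤ ‖ψ.normed volume t‖ * 1 :=
              mul_le_mul_of_nonneg_left this (norm_nonneg _)
          _ = ψ.normed volume t := by rw [mul_one, Real.norm_eq_abs, abs_of_nonneg (ψ.nonneg_normed t)]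
    have hconv : ∀ z : EuclideanSpace ℝ (Fin d), φ z = ∫ t, ψ.normed volume t • u (z - t) := by
      intro z
      rw [hφ]
      rw [convolution_def]
      simp only [lsmul_apply]
    rw [Real.dist_eq, hconv x, hconv y, ← integral_sub (key x) (key y)]
    have : ∀ t, ψ.normed volume t • u (x - t) - ψ.normed volume t • u (y - t)
        = ψ.normed volume t • (u (x - t) - u (y - t)) := fun t => (smul_sub _ _ _).symm
    simp_rw [this]
    calc |∫ t, ψ.normed volume t • (u (x - t) - u (y - t))|
        ≤ ∫ t, ψ.normed volume t * ((1/w) * dist x y) := by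
          rw [← Real.norm_eq_abs]
          apply norm_integral_le_of_norm_le ((ψ.integrable_normed (μ := volume)).mul_const _)
          filter_upwards with t
          rw [norm_smul, Real.norm_eq_abs (ψ.normed volume t), abs_of_nonneg (ψ.nonneg_normed t),
            Real.norm_eq_abs, ← Real.dist_eq]
          apply mul_le_mul_of_nonneg_left _ (ψ.nonneg_normed t)
          calc dist (u (x - t)) (u (y - t)) ≤ (1/w) * dist (x - t) (y - t) := u_lip _ _
            _ = (1/w) * dist x y := by rw [dist_sub_right]
      _ = (1/w) * dist x y := by
          rw [integral_mul_const, ψ.integral_normed (μ := volume), one_mul]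
  have hfd : ∀ x, ‖fderiv ℝ φ x‖ ≤ 4 / (b - a) := by
    intro x
    have hlip : LipschitzWith (Real.toNNReal (1/w)) φ := by
      apply LipschitzWith.of_dist_le_mul
      intro x y
      rw [Real.coe_toNNReal _ (by positivity)]
      exact φ_lip x y
    have := norm_fderiv_le_of_lipschitz ℝ hlip (x₀ := x)
    rw [Real.coe_toNNReal _ (by positivity)] at this
    refine this.trans_eq ?_
    rw [hwdef]
    field_simp
  exact ⟨φ, hdiff, hφ0, hφ1, heq1, heq0, hfd⟩

lemma thin_empty (d : ℕ) {κ : ℝ} (hκ : 0 < κ) :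
    ThinWith d (∅ : Set (EuclideanSpace ℝ (Fin d))) κ := by
  refine ⟨1, one_pos, 1, one_pos, fun δ hδ g hg h2 hd2 => ?_⟩
  rw [thickening_empty]
  have hG : 0 ≤ ∫ x, (g x)^2 := integral_nonneg fun x => sq_nonneg _
  have hD : 0 ≤ ∫ x, ‖fderiv ℝ g x‖^2 := integral_nonneg fun x => sq_nonneg _
  rw [Measure.restrict_empty, integral_zero_measure]
  have := sq_nonneg δ
  nlinarith

lemma thin_mono (d : ℕ) (E : Set (EuclideanSpace ℝ (Fin d))) {κ κ' : ℝ} (h : κ ≤ κ')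
    (ht : ThinWith d E κ) : ThinWith d E κ' := by
  obtain ⟨C, hC, δ₀, hδ₀, H⟩ := ht
  refine ⟨C, hC, δ₀, hδ₀, fun δ hδ g hg h2 hd2 => ?_⟩
  have hG : 0 ≤ ∫ x, (g x)^2 := integral_nonneg fun x => sq_nonneg _
  have h1 := H δ hδ g hg h2 hd2
  have h2 := mul_le_mul_of_nonneg_right h hG
  linarith

set_option maxHeartbeats 1000000 in
lemma thin_step (d : ℕ) (E : Set (EuclideanSpace ℝ (Fin d))) {κ ε : ℝ} (hκ0 : 0 < κ)
    (hκ1 : κ < 1) (hε : 0 < ε) (h : ThinWith d E κ) : ThinWith d E (κ^2 + ε) := by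
  rcases E.eq_empty_or_nonempty with rfl | hE
  · exact thin_empty d (by positivity)
  obtain ⟨C, hC, δ₀, hδ₀, H⟩ := h
  set K : ℝ := 1 + Real.sqrt (32*C/ε) with hK
  have hsq : 0 < Real.sqrt (32*C/ε) := Real.sqrt_pos.2 (by positivity)
  have hK1 : 1 < K := by rw [hK]; linarith
  have hKsq : (K - 1)^2 = 32*C/ε := by
    rw [hK, add_sub_cancel_left, Real.sq_sqrt (by positivity)]
  refine ⟨C*(κ*K^2+2), by positivity, δ₀/K, by positivity, ?_⟩
  rintro δ ⟨hδ0, hδK⟩ g hg hg2 hgd2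
  have hδδ₀ : δ < δ₀ := hδK.trans_le (div_le_self hδ₀.le hK1.le)
  have hKδ : K*δ < δ₀ := by
    rw [lt_div_iff₀ (by linarith)] at hδK; linarith [hδK]
  obtain ⟨φ, φdiff, φ0, φ1, φeq1, φeq0, φfd⟩ :=
    cutoff_exists d E hE hδ0 (show δ < K*δ by nlinarith)
  set c : ℝ := 4/(K*δ - δ) with hc
  have hKδδ : 0 < K*δ - δ := by nlinarith
  have hc0 : 0 < c := by rw [hc]; positivity
  have hG : 0 ≤ ∫ x, (g x)^2 := integral_nonneg fun x => sq_nonneg _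
  have hD : 0 ≤ ∫ x, ‖fderiv ℝ g x‖^2 := integral_nonneg fun x => sq_nonneg _
  set h' : EuclideanSpace ℝ (Fin d) → ℝ := fun x => φ x * g x with hh
  have h'diff : Differentiable ℝ h' := φdiff.mul hg
  have habs : ∀ x, |φ x| ≤ 1 := fun x => abs_le.2 ⟨by linarith [φ0 x], φ1 x⟩
  have h'2 : MemLp h' 2 volume := by
    apply MemLp.of_le hg2 h'diff.continuous.aestronglyMeasurable
    filter_upwards with x
    rw [hh]
    simp only [Real.norm_eq_abs, abs_mul]
    exact mul_le_of_le_one_left (abs_nonneg _) (habs x)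
  have hfd : ∀ x, ‖fderiv ℝ h' x‖ ≤ ‖fderiv ℝ g x‖ + c * ‖g x‖ := by
    intro x
    have : fderiv ℝ h' x = φ x • fderiv ℝ g x + g x • fderiv ℝ φ x :=
      fderiv_mul (φdiff x) (hg x)
    rw [this]
    calc ‖φ x • fderiv ℝ g x + g x • fderiv ℝ φ x‖
        ≤ ‖φ x • fderiv ℝ g x‖ + ‖g x • fderiv ℝ φ x‖ := norm_add_le _ _
      _ = |φ x| * ‖fderiv ℝ g x‖ + |g x| * ‖fderiv ℝ φ x‖ := by
          rw [norm_smul, norm_smul, Real.norm_eq_abs, Real.norm_eq_abs]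
      _ ≤ 1 * ‖fderiv ℝ g x‖ + |g x| * c := by
          gcongr
          · exact habs x
          · exact (φfd x).trans_eq (by rw [hc])
      _ = ‖fderiv ℝ g x‖ + c * ‖g x‖ := by rw [Real.norm_eq_abs]; ring
  have h'd2 : MemLp (fun x => ‖fderiv ℝ h' x‖) 2 volume := by
    have hdom : MemLp (fun x => ‖fderiv ℝ g x‖ + c * ‖g x‖) 2 volume :=
      hgd2.add ((hg2.norm).const_mul c)
    apply MemLp.of_le hdom ((measurable_fderiv ℝ h').norm.aestronglyMeasurable)
    filter_upwards with x
    rw [Real.norm_eq_abs, abs_of_nonneg (norm_nonneg _), Real.norm_eq_abs,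
      abs_of_nonneg (by positivity : (0:ℝ) ≤ ‖fderiv ℝ g x‖ + c * ‖g x‖)]
    exact hfd x
  have I1 : ∫ x in thickening δ E, (g x)^2 = ∫ x in thickening δ E, (h' x)^2 := by
    apply setIntegral_congr_fun isOpen_thickening.measurableSet
    intro x hx
    rw [hh]
    simp only
    rw [φeq1 x hx, one_mul]
  have I2 := H δ ⟨hδ0, hδδ₀⟩ h' h'diff h'2 h'd2
  have I3a : ∫ x, (h' x)^2 = ∫ x in thickening (K*δ) E, (h' x)^2 := by
    refine (setIntegral_eq_integral_of_forall_compl_eq_zero fun x hx => ?_).symm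
    rw [hh]
    simp only
    rw [φeq0 x hx, zero_mul]
    norm_num
  have I3b : ∫ x in thickening (K*δ) E, (h' x)^2 ≤ ∫ x in thickening (K*δ) E, (g x)^2 := by
    apply setIntegral_mono_on h'2.integrable_sq.integrableOn hg2.integrable_sq.integrableOn
      isOpen_thickening.measurableSet
    intro x _
    rw [hh]
    simp only
    nlinarith [mul_nonneg (mul_nonneg (sub_nonneg.2 (φ1 x))
      (by linarith [φ0 x] : (0:ℝ) ≤ 1 + φ x)) (sq_nonneg (g x)), sq_nonneg (g x)]
  have I4 := H (K*δ) ⟨by positivity, hKδ⟩ g hg hg2 hgd2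
  have I5 : ∫ x, ‖fderiv ℝ h' x‖^2 ≤ ∫ x, (2*‖fderiv ℝ g x‖^2 + 2*c^2*(g x)^2) := by
    apply integral_mono_of_nonneg (ae_of_all _ fun x => sq_nonneg _)
    · exact (hgd2.integrable_sq.const_mul 2).add ((hg2.integrable_sq).const_mul (2*c^2))
    · filter_upwards with x
      have h1 := hfd x
      have h2 : ‖g x‖^2 = (g x)^2 := by rw [Real.norm_eq_abs, sq_abs]
      nlinarith [sq_nonneg (‖fderiv ℝ g x‖ - c * ‖g x‖), norm_nonneg (fderiv ℝ h' x),
        norm_nonneg (fderiv ℝ g x), norm_nonneg (g x), mul_nonneg hc0.le (norm_nonneg (g x))]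
  have I5b : ∫ x, (2*‖fderiv ℝ g x‖^2 + 2*c^2*(g x)^2)
      = 2*(∫ x, ‖fderiv ℝ g x‖^2) + 2*c^2*(∫ x, (g x)^2) := by
    rw [integral_add (hgd2.integrable_sq.const_mul 2) ((hg2.integrable_sq).const_mul (2*c^2)),
      integral_const_mul, integral_const_mul]
  have hcc : C*δ^2*(2*c^2) = ε := by
    have hKne : K - 1 ≠ 0 := by linarith
    have hδne : δ ≠ 0 := hδ0.ne'
    have hεne : ε ≠ 0 := hε.ne'
    have key : (K-1)^2 * ε = 32*C := by rw [hKsq]; field_simp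
    rw [hc, show K*δ - δ = (K-1)*δ by ring, div_pow, mul_pow, hKsq]
    field_simp
    ring
  have J1 : ∫ x, (h' x)^2 ≤ κ * (∫ x, (g x)^2) + C*(K*δ)^2*(∫ x, ‖fderiv ℝ g x‖^2) := by
    rw [I3a]; exact I3b.trans I4
  have J2 : ∫ x, ‖fderiv ℝ h' x‖^2
      ≤ 2*(∫ x, ‖fderiv ℝ g x‖^2) + 2*c^2*(∫ x, (g x)^2) := I5.trans_eq I5b
  calc ∫ x in thickening δ E, (g x)^2 = ∫ x in thickening δ E, (h' x)^2 := I1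
    _ ≤ κ * (∫ x, (h' x)^2) + C * δ^2 * ∫ x, ‖fderiv ℝ h' x‖^2 := I2
    _ ≤ κ * (κ * (∫ x, (g x)^2) + C*(K*δ)^2*(∫ x, ‖fderiv ℝ g x‖^2))
        + C * δ^2 * (2*(∫ x, ‖fderiv ℝ g x‖^2) + 2*c^2*(∫ x, (g x)^2)) := by
        have t1 := mul_le_mul_of_nonneg_left J1 hκ0.le
        have t2 := mul_le_mul_of_nonneg_left J2 (show (0:ℝ) ≤ C*δ^2 by positivity)
        linarith
    _ = κ^2 * (∫ x, (g x)^2) + (C*δ^2*(2*c^2)) * (∫ x, (g x)^2)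
        + C*(κ*K^2+2) * δ^2 * (∫ x, ‖fderiv ℝ g x‖^2) := by ring
    _ = (κ^2 + ε) * (∫ x, (g x)^2) + C*(κ*K^2+2) * δ^2 * (∫ x, ‖fderiv ℝ g x‖^2) := by
        rw [hcc]; ring


lemma thin_le (d : ℕ) (E : Set (EuclideanSpace ℝ (Fin d))) {s t : ℝ} (hs0 : 0 < s) (hs1 : s < 1)
    (ht0 : 0 < t) (ht1 : t < 1) (h : ThinWith d E s) : ThinWith d E t := by
  set r : ℝ := (s+1)/2 with hr
  have hr0 : 0 < r := by rw [hr]; linarith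
  have hr1 : r < 1 := by rw [hr]; linarith
  have main : ∀ n : ℕ, ThinWith d E (max t (s * r^n)) := by
    intro n
    induction n with
    | zero =>
      exact thin_mono d E (show s ≤ max t (s*r^0) by
        rw [pow_zero, mul_one]; exact le_max_right _ _) h
    | succ n ih =>
      set sn := max t (s*r^n) with hsn
      have hrn1 : r^n ≤ 1 := pow_le_one₀ hr0.le hr1.le
      have hsns : s*r^n ≤ s := by nlinarith
      have hsn0 : 0 < sn := lt_max_of_lt_left ht0
      have hsn1 : sn < 1 := max_lt ht1 (by nlinarith)
      have hεpos : 0 < sn*(1-sn)/2 := by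
        have := sub_pos.2 hsn1
        positivity
      have step := thin_step d E hsn0 hsn1 hεpos ih
      apply thin_mono d E _ step
      rcases le_total (s*r^n) t with hc | hc
      · have hsnt : sn = t := max_eq_left hc
        rw [hsnt]
        have : t^2 + t*(1-t)/2 ≤ t := by nlinarith
        exact this.trans (le_max_left _ _)
      · have hsnt : sn = s*r^n := max_eq_right hc
        have hle : sn^2 + sn*(1-sn)/2 ≤ s * r^(n+1) := by
          have h1 : sn^2 + sn*(1-sn)/2 = sn*(sn+1)/2 := by ring
          rw [h1, hsnt, pow_succ]
          have h2 : (s*r^n+1)/2 ≤ r := by rw [hr]; nlinarith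
          have h3 : 0 ≤ s*r^n := by positivity
          calc s*r^n*(s*r^n+1)/2 = (s*r^n)*((s*r^n+1)/2) := by ring
            _ ≤ (s*r^n)*r := by nlinarith
            _ = s*(r^n*r) := by ring
        exact hle.trans (le_max_right _ _)
  obtain ⟨n, hn⟩ : ∃ n : ℕ, r^n < t := exists_pow_lt_of_lt_one ht0 hr1
  have hlt : s * r^n ≤ t := by nlinarith [pow_nonneg hr0.le n]
  have := main n
  rwa [max_eq_left hlt] at this


/-- For any fixed `κ ∈ (0,1)`, a set `E ⊂ ℝ^d` is `H¹`-thin (thinness inequality with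
constant `1/2`) if and only if it satisfies the thinness inequality with constant `κ`. -/
theorem stmt_12 (d : ℕ) (E : Set (EuclideanSpace ℝ (Fin d))) (κ : ℝ)
    (hκ : κ ∈ Set.Ioo (0 : ℝ) 1) :
    ThinWith d E (1 / 2) ↔ ThinWith d E κ := by
  constructor
  · exact fun h => thin_le d E (by norm_num) (by norm_num) hκ.1 hκ.2 h
  · exact fun h => thin_le d E hκ.1 hκ.2 (by norm_num) (by norm_num) h
end

section
/- The graph E = {(x, h(x)) : x ∈ ℝ^{d−1}} of any Lipschitz function h : ℝ^{d−1} → ℝ is H¹-thin in ℝ^d; moreover, with N = √(1 + M²) where M is a Lipschitz constant of h, one has ∫_{E_δ} g² dx ≤ 2Nδ ‖g‖_{L²} ‖∇g‖_{L²} for all g ∈ H¹(ℝ^d) and δ > 0. -/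
open MeasureTheory Metric Set
open scoped ENNReal NNReal


lemma aux_small_right (u : ℝ → ℝ) (hu : Integrable (fun t => u t ^ 2)) (y : ℝ) (ε : ℝ)
    (hε : 0 < ε) : ∃ t, y ≤ t ∧ u t ^ 2 < ε := by
  by_contra hc
  push_neg at hc
  set I := ∫ t, u t ^ 2 with hI
  have hI0 : 0 ≤ I := integral_nonneg fun t => sq_nonneg _
  set A : ℝ := I / ε + 1 with hA
  have hA0 : 0 < A := by positivity
  have hvol : (volume (Ioc y (y + A))).toReal = A := by
    rw [Real.volume_Ioc, ENNReal.toReal_ofReal (by linarith)]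
    ring
  have h1 : ε * A ≤ ∫ t in Ioc y (y + A), u t ^ 2 := by
    have := setIntegral_ge_of_const_le (μ := volume) (s := Ioc y (y + A)) (c := ε)
      measurableSet_Ioc (by simp [Real.volume_Ioc]) (fun t ht => hc t ht.1.le)
      hu.integrableOn
    rwa [measureReal_def, hvol, smul_eq_mul, mul_comm] at this
  have h2 : ∫ t in Ioc y (y + A), u t ^ 2 ≤ I :=
    setIntegral_le_integral hu (Filter.Eventually.of_forall fun t => sq_nonneg _)
  have : ε * A = I + ε := by rw [hA]; field_simp
  linarith

lemma aux_small_left (u : ℝ → ℝ) (hu : Integrable (fun t => u t ^ 2)) (y : ℝ) (ε : ℝ)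
    (hε : 0 < ε) : ∃ t, t ≤ y ∧ u t ^ 2 < ε := by
  by_contra hc
  push_neg at hc
  set I := ∫ t, u t ^ 2 with hI
  have hI0 : 0 ≤ I := integral_nonneg fun t => sq_nonneg _
  set A : ℝ := I / ε + 1 with hA
  have hA0 : 0 < A := by positivity
  have hvol : (volume (Ico (y - A) y)).toReal = A := by
    rw [Real.volume_Ico, ENNReal.toReal_ofReal (by linarith)]
    ring
  have h1 : ε * A ≤ ∫ t in Ico (y - A) y, u t ^ 2 := by
    have := setIntegral_ge_of_const_le (μ := volume) (s := Ico (y - A) y) (c := ε)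
      measurableSet_Ico (by simp [Real.volume_Ico]) (fun t ht => hc t ht.2.le)
      hu.integrableOn
    rwa [measureReal_def, hvol, smul_eq_mul, mul_comm] at this
  have h2 : ∫ t in Ico (y - A) y, u t ^ 2 ≤ I :=
    setIntegral_le_integral hu (Filter.Eventually.of_forall fun t => sq_nonneg _)
  have : ε * A = I + ε := by rw [hA]; field_simp
  linarith

lemma aux_ptBound (u u' w : ℝ → ℝ) (hd : ∀ t, HasDerivAt u (u' t) t)
    (hle : ∀ t, |u' t| ≤ w t) (hu2 : Integrable (fun t => u t ^ 2))
    (huw : Integrable (fun t => |u t| * w t)) (y : ℝ) :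
    u y ^ 2 ≤ ∫ t, |u t| * w t := by
  have hw0 : ∀ t, 0 ≤ w t := fun t => (abs_nonneg _).trans (hle t)
  have hu'meas : Measurable u' := by
    have : u' = deriv u := funext fun t => ((hd t).deriv).symm
    rw [this]; exact measurable_deriv u
  have hucont : Continuous u := by
    rw [continuous_iff_continuousAt]; exact fun t => (hd t).continuousAt
  set D : ℝ → ℝ := fun t => 2 * u t * u' t with hD
  have hDd : ∀ t, HasDerivAt (fun s => u s ^ 2) (D t) t := by
    intro t
    have := (hd t).fun_pow 2
    simpa [hD, mul_comm, mul_assoc, mul_left_comm] using this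
  have habs : ∀ t, |D t| ≤ 2 * (|u t| * w t) := by
    intro t
    have h1 : |D t| = 2 * (|u t| * |u' t|) := by
      rw [hD]; simp [abs_mul, abs_of_nonneg, mul_assoc]
    rw [h1]
    have := hle t
    nlinarith [abs_nonneg (u t)]
  have hDint : Integrable D := by
    refine Integrable.mono' (huw.const_mul 2) ?_ ?_
    · exact (((hucont.measurable.const_mul 2).mul hu'meas)).aestronglyMeasurable
    · exact Filter.Eventually.of_forall fun t => by
        rw [Real.norm_eq_abs]; exact habs t
  have huwR : ∀ s : Set ℝ, MeasurableSet s →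
      ∫ x in s, |D x| ∂volume ≤ 2 * ∫ x in s, |u x| * w x ∂volume := by
    intro s hs
    rw [← integral_const_mul]
    refine setIntegral_mono_on (hDint.abs.integrableOn) ((huw.const_mul 2).integrableOn) hs
      fun x _ => habs x
  have hsub : ∀ s₁ s₂ : Set ℝ, s₁ ⊆ s₂ →
      ∫ x in s₁, |u x| * w x ∂volume ≤ ∫ x in s₂, |u x| * w x ∂volume := by
    intro s₁ s₂ h12
    refine setIntegral_mono_set huw.integrableOn ?_ (Filter.Eventually.of_forall h12)
    exact Filter.Eventually.of_forall fun x => mul_nonneg (abs_nonneg _) (hw0 x)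
  have hright : u y ^ 2 ≤ 2 * ∫ t in Ici y, |u t| * w t := by
    refine le_of_forall_pos_le_add fun ε hε => ?_
    obtain ⟨t, hty, htε⟩ := aux_small_right u hu2 y ε hε
    have hftc : ∫ s in Ioc y t, D s = u t ^ 2 - u y ^ 2 := by
      rw [← intervalIntegral.integral_of_le hty]
      exact intervalIntegral.integral_eq_sub_of_hasDerivAt (fun s _ => hDd s)
        (hDint.intervalIntegrable)
    have hb1 : |∫ s in Ioc y t, D s| ≤ ∫ s in Ioc y t, |D s| := by
      simpa [Real.norm_eq_abs] using
        norm_integral_le_integral_norm (μ := volume.restrict (Ioc y t)) D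
    have hb2 : ∫ s in Ioc y t, |D s| ≤ 2 * ∫ s in Ici y, |u s| * w s :=
      (huwR _ measurableSet_Ioc).trans (by
        have := hsub (Ioc y t) (Ici y) (fun x hx => hx.1.le)
        linarith)
    have : u y ^ 2 = u t ^ 2 - ∫ s in Ioc y t, D s := by rw [hftc]; ring
    rw [this]
    have hba : -(∫ s in Ioc y t, D s) ≤ |∫ s in Ioc y t, D s| := neg_le_abs _
    linarith
  have hleft : u y ^ 2 ≤ 2 * ∫ t in Iic y, |u t| * w t := by
    refine le_of_forall_pos_le_add fun ε hε => ?_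
    obtain ⟨t, hty, htε⟩ := aux_small_left u hu2 y ε hε
    have hftc : ∫ s in Ioc t y, D s = u y ^ 2 - u t ^ 2 := by
      rw [← intervalIntegral.integral_of_le hty]
      exact intervalIntegral.integral_eq_sub_of_hasDerivAt (fun s _ => hDd s)
        (hDint.intervalIntegrable)
    have hb1 : |∫ s in Ioc t y, D s| ≤ ∫ s in Ioc t y, |D s| := by
      simpa [Real.norm_eq_abs] using
        norm_integral_le_integral_norm (μ := volume.restrict (Ioc t y)) D
    have hb2 : ∫ s in Ioc t y, |D s| ≤ 2 * ∫ s in Iic y, |u s| * w s :=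
      (huwR _ measurableSet_Ioc).trans (by
        have := hsub (Ioc t y) (Iic y) (fun x hx => hx.2)
        linarith)
    have : u y ^ 2 = u t ^ 2 + ∫ s in Ioc t y, D s := by rw [hftc]; ring
    rw [this]
    have hba : (∫ s in Ioc t y, D s) ≤ |∫ s in Ioc t y, D s| := le_abs_self _
    linarith
  have hIci : ∫ t in Ici y, |u t| * w t = ∫ t in Ioi y, |u t| * w t :=
    integral_Ici_eq_integral_Ioi
  have hsplit : (∫ t in Iic y, |u t| * w t) + (∫ t in Ioi y, |u t| * w t)
      = ∫ t, |u t| * w t :=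
    intervalIntegral.integral_Iic_add_Ioi huw.integrableOn huw.integrableOn
  rw [hIci] at hright
  linarith

lemma aux_lineBound (u u' w : ℝ → ℝ) (hd : ∀ t, HasDerivAt u (u' t) t)
    (hle : ∀ t, |u' t| ≤ w t) (hu2 : Integrable (fun t => u t ^ 2))
    (huw : Integrable (fun t => |u t| * w t)) (c r : ℝ) (hr : 0 ≤ r) :
    ∫ t in Ioo (c - r) (c + r), u t ^ 2 ≤ 2 * r * ∫ t, |u t| * w t := by
  set K := ∫ t, |u t| * w t with hK
  have hK0 : 0 ≤ K := integral_nonneg fun t =>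
    mul_nonneg (abs_nonneg _) ((abs_nonneg _).trans (hle t))
  have h1 : ∫ t in Ioo (c - r) (c + r), u t ^ 2 ≤ ∫ _t in Ioo (c - r) (c + r), K := by
    refine setIntegral_mono_on hu2.integrableOn ?_ measurableSet_Ioo
      (fun t _ => aux_ptBound u u' w hd hle hu2 huw t)
    exact integrableOn_const (by rw [Real.volume_Ioo]; exact ENNReal.ofReal_ne_top)
  have h2 : ∫ _t in Ioo (c - r) (c + r), K = 2 * r * K := by
    rw [setIntegral_const, measureReal_def, Real.volume_Ioo, smul_eq_mul,
      ENNReal.toReal_ofReal (by linarith)]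
    ring
  linarith

noncomputable def Phi (d : ℕ) : (Fin d → ℝ) × ℝ ≃ᵐ EuclideanSpace ℝ (Fin (d + 1)) :=
  MeasurableEquiv.prodComm.trans
    (((MeasurableEquiv.piFinSuccAbove (fun _ : Fin (d + 1) => ℝ) (Fin.last d)).symm).trans
      (MeasurableEquiv.toLp 2 (Fin (d + 1) → ℝ)))

lemma Phi_coe (d : ℕ) (x : Fin d → ℝ) (t : ℝ) :
    (Phi d (x, t) : Fin (d + 1) → ℝ) = Fin.snoc x t := by
  simp [Phi, MeasurableEquiv.trans_apply, MeasurableEquiv.prodComm,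
    MeasurableEquiv.piFinSuccAbove, MeasurableEquiv.coe_toLp,
    Fin.insertNth_last', Fin.snocEquiv]

lemma Phi_mp (d : ℕ) :
    MeasurePreserving (Phi d) ((volume : Measure (Fin d → ℝ)).prod volume) volume := by
  have h1 := EuclideanSpace.volume_preserving_symm_measurableEquiv_toLp (Fin (d + 1))
  have h2 := volume_preserving_piFinSuccAbove (fun _ : Fin (d + 1) => ℝ) (Fin.last d)
  exact (Measure.measurePreserving_swap).trans ((MeasurePreserving.symm _ h2).trans (MeasurePreserving.symm _ h1))

lemma aux_incl (d : ℕ) (M : NNReal) (h : EuclideanSpace ℝ (Fin d) → ℝ)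
    (hLip : LipschitzWith M h) (δ : ℝ) (hδ : 0 < δ) :
    Metric.thickening δ
      {p : EuclideanSpace ℝ (Fin (d + 1)) |
        p (Fin.last d) = h (WithLp.toLp 2 (Fin.init (p : Fin (d + 1) → ℝ) : Fin d → ℝ) :
          EuclideanSpace ℝ (Fin d))} ⊆
    {p : EuclideanSpace ℝ (Fin (d + 1)) |
      |p (Fin.last d) - h (WithLp.toLp 2 (Fin.init (p : Fin (d + 1) → ℝ) : Fin d → ℝ) :
        EuclideanSpace ℝ (Fin d))| < Real.sqrt (1 + (M : ℝ) ^ 2) * δ} := by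
  intro p hp
  rw [Metric.mem_thickening_iff] at hp
  obtain ⟨z, hz, hdist⟩ := hp
  simp only [Set.mem_setOf_eq] at hz ⊢
  set P : EuclideanSpace ℝ (Fin d) := WithLp.toLp 2 (Fin.init (p : Fin (d + 1) → ℝ) : Fin d → ℝ) with hP
  set Z : EuclideanSpace ℝ (Fin d) := WithLp.toLp 2 (Fin.init (z : Fin (d + 1) → ℝ) : Fin d → ℝ) with hZ
  set a : ℝ := dist P Z with ha
  set b : ℝ := |p (Fin.last d) - z (Fin.last d)| with hb
  set D : ℝ := dist p z with hDd
  have key : a ^ 2 + b ^ 2 = D ^ 2 := by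
    have h1 : D ^ 2 = ∑ i : Fin (d + 1), dist (p i) (z i) ^ 2 := by
      rw [hDd, EuclideanSpace.dist_eq, Real.sq_sqrt]
      exact Finset.sum_nonneg fun i _ => sq_nonneg _
    have h2 : a ^ 2 = ∑ i : Fin d, dist (p i.castSucc) (z i.castSucc) ^ 2 := by
      rw [ha, EuclideanSpace.dist_eq, Real.sq_sqrt]
      · rfl
      · exact Finset.sum_nonneg fun i _ => sq_nonneg _
    rw [h1, Fin.sum_univ_castSucc, h2, Real.dist_eq, hb, sq_abs]
  have htri : |p (Fin.last d) - h P| ≤ b + (M : ℝ) * a := by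
    have h3 : |h Z - h P| ≤ (M : ℝ) * a := by
      rw [← Real.dist_eq]
      have := hLip.dist_le_mul Z P
      simpa [dist_comm] using this
    calc |p (Fin.last d) - h P| ≤ |p (Fin.last d) - z (Fin.last d)| + |z (Fin.last d) - h P| :=
          abs_sub_le _ _ _
      _ = b + |h Z - h P| := by rw [← hz]
      _ ≤ b + (M : ℝ) * a := by linarith
  have hsq : (b + (M : ℝ) * a) ^ 2 ≤ (1 + (M : ℝ) ^ 2) * D ^ 2 := by
    nlinarith [sq_nonneg (a - (M : ℝ) * b), key]
  have hba0 : 0 ≤ b + (M : ℝ) * a :=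
    add_nonneg (abs_nonneg _) (mul_nonneg M.2 dist_nonneg)
  have h4 : b + (M : ℝ) * a ≤ Real.sqrt (1 + (M : ℝ) ^ 2) * D := by
    have := Real.sqrt_le_sqrt hsq
    rwa [Real.sqrt_sq hba0, Real.sqrt_mul (by positivity), Real.sqrt_sq dist_nonneg] at this
  have hN : 0 < Real.sqrt (1 + (M : ℝ) ^ 2) := Real.sqrt_pos.2 (by positivity)
  calc |p (Fin.last d) - h P| ≤ b + (M : ℝ) * a := htri
    _ ≤ Real.sqrt (1 + (M : ℝ) ^ 2) * D := h4
    _ < Real.sqrt (1 + (M : ℝ) ^ 2) * δ := by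
        exact mul_lt_mul_of_pos_left hdist hN

lemma aux_main (d : ℕ) (M : NNReal) (h : EuclideanSpace ℝ (Fin d) → ℝ)
    (hLip : LipschitzWith M h) (δ : ℝ) (hδ : 0 < δ)
    (g : EuclideanSpace ℝ (Fin (d + 1)) → ℝ) (hgdiff : Differentiable ℝ g)
    (hg2 : MemLp g 2 volume) (hgd2 : MemLp (fun x => ‖fderiv ℝ g x‖) 2 volume) :
    ∫ x in Metric.thickening δ
        {p : EuclideanSpace ℝ (Fin (d + 1)) |
          p (Fin.last d) = h (WithLp.toLp 2 (Fin.init (p : Fin (d + 1) → ℝ) : Fin d → ℝ) :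
            EuclideanSpace ℝ (Fin d))}, (g x) ^ 2 ≤
      2 * Real.sqrt (1 + (M : ℝ) ^ 2) * δ * Real.sqrt (∫ x, (g x) ^ 2) *
        Real.sqrt (∫ x, ‖fderiv ℝ g x‖ ^ 2) := by
  set N := Real.sqrt (1 + (M : ℝ) ^ 2) with hN
  have hN0 : 0 < N := Real.sqrt_pos.2 (by positivity)
  set q := N * δ with hq
  have hq0 : 0 < q := mul_pos hN0 hδ
  set S : Set (EuclideanSpace ℝ (Fin (d + 1))) :=
    {p | |p (Fin.last d) - h (WithLp.toLp 2 (Fin.init (p : Fin (d + 1) → ℝ)))| < q} with hS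
  -- measurability of S
  have hmeas1 : Measurable (fun p : EuclideanSpace ℝ (Fin (d + 1)) => p (Fin.last d)) :=
    (measurable_pi_apply (Fin.last d)).comp
      (MeasurableEquiv.toLp 2 (Fin (d + 1) → ℝ)).symm.measurable
  have hmeas2 : Measurable (fun p : EuclideanSpace ℝ (Fin (d + 1)) =>
      h (WithLp.toLp 2 (Fin.init (p : Fin (d + 1) → ℝ)))) := by
    have hm : Measurable (fun p : EuclideanSpace ℝ (Fin (d + 1)) =>
        (WithLp.toLp 2 (Fin.init (p : Fin (d + 1) → ℝ) : Fin d → ℝ) : EuclideanSpace ℝ (Fin d))) :=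
      (MeasurableEquiv.toLp 2 (Fin d → ℝ)).measurable.comp
        (measurable_pi_lambda _ fun i => (measurable_pi_apply i.castSucc).comp
          (MeasurableEquiv.toLp 2 (Fin (d + 1) → ℝ)).symm.measurable)
    exact hLip.continuous.measurable.comp hm
  have hSmeas : MeasurableSet S :=
    measurableSet_lt (hmeas1.sub hmeas2).abs measurable_const
  -- integrability
  have hg2int : Integrable (fun p => g p ^ 2) volume := hg2.integrable_sq
  have hgabs : MemLp (fun p => |g p|) 2 volume := by
    simpa [Real.norm_eq_abs] using hg2.norm
  have hF'int : Integrable (fun p => |g p| * ‖fderiv ℝ g p‖) volume := by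
    have h11 : (1 : ℝ≥0∞) / 1 = 1 / 2 + 1 / 2 := by
      rw [div_one]; exact (ENNReal.add_halves 1).symm
    have := hgd2.smul hgabs (r := 1)
    exact memLp_one_iff_integrable.mp (by simpa [Pi.smul_apply, smul_eq_mul, Pi.mul_def] using this)
  -- step B
  have hsubset := aux_incl d M h hLip δ hδ
  have stepB : (∫ x in Metric.thickening δ
      {p : EuclideanSpace ℝ (Fin (d + 1)) |
        p (Fin.last d) = h (WithLp.toLp 2 (Fin.init (p : Fin (d + 1) → ℝ) : Fin d → ℝ) :
          EuclideanSpace ℝ (Fin d))}, (g x) ^ 2) ≤ ∫ p in S, g p ^ 2 :=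
    setIntegral_mono_set hg2int.integrableOn
      (Filter.Eventually.of_forall fun p => sq_nonneg _)
      (HasSubset.Subset.eventuallyLE hsubset)
  -- derivative direction vector
  set v : EuclideanSpace ℝ (Fin (d + 1)) := EuclideanSpace.single (Fin.last d) (1 : ℝ) with hv
  have hvnorm : ‖v‖ = 1 := by rw [hv, EuclideanSpace.norm_single]; exact norm_one
  have hline : ∀ (x : Fin d → ℝ) (t : ℝ), HasDerivAt (fun s => Phi d (x, s)) v t := by
    intro x t
    have heq : (fun s => Phi d (x, s)) = fun s => (Phi d (x, 0) + s • v) := by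
      funext s
      ext j
      have h1 := congrFun (Phi_coe d x s) j
      have h2 := congrFun (Phi_coe d x 0) j
      have h3 : (Phi d (x, 0) + s • v) j = (Phi d (x, 0)) j + s * v j := rfl
      rw [h1, h3, h2]
      refine Fin.lastCases ?_ (fun i => ?_) j
      · simp [hv, Fin.snoc_last, EuclideanSpace.single_apply]
      · simp [hv, Fin.snoc_castSucc, EuclideanSpace.single_apply,
          (Fin.castSucc_lt_last i).ne]
    rw [heq]
    simpa using ((hasDerivAt_id t).smul_const v).const_add (Phi d (x, 0))
  have hPhi := Phi_mp d
  have hemb := (Phi d).measurableEmbedding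
  have hFint : Integrable (S.indicator fun p => g p ^ 2) volume := hg2int.indicator hSmeas
  have hcomp2 : Integrable (fun z : (Fin d → ℝ) × ℝ => g (Phi d z) ^ 2)
      ((volume : Measure (Fin d → ℝ)).prod volume) := by
    have := (hPhi.integrable_comp_emb hemb).2 hg2int
    simpa [Function.comp_def] using this
  have hcompF : Integrable (fun z : (Fin d → ℝ) × ℝ =>
      (S.indicator fun p => g p ^ 2) (Phi d z))
      ((volume : Measure (Fin d → ℝ)).prod volume) := by
    have := (hPhi.integrable_comp_emb hemb).2 hFint
    simpa [Function.comp_def] using this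
  have hcompF' : Integrable (fun z : (Fin d → ℝ) × ℝ =>
      |g (Phi d z)| * ‖fderiv ℝ g (Phi d z)‖)
      ((volume : Measure (Fin d → ℝ)).prod volume) := by
    have := (hPhi.integrable_comp_emb hemb).2 hF'int
    simpa [Function.comp_def] using this
  -- membership
  have hSmem : ∀ (x : Fin d → ℝ) (t : ℝ),
      (Phi d (x, t) ∈ S ↔ t ∈ Ioo (h (WithLp.toLp 2 x) - q) (h (WithLp.toLp 2 x) + q)) := by
    intro x t
    have h1 : (Phi d (x, t)) (Fin.last d) = t := by
      rw [congrFun (Phi_coe d x t) (Fin.last d)]; exact Fin.snoc_last _ _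
    have h2 : (Fin.init ((Phi d (x, t)) : Fin (d + 1) → ℝ) : Fin d → ℝ) = x := by
      rw [Phi_coe d x t]; exact Fin.init_snoc _ _
    simp only [hS, Set.mem_setOf_eq, Set.mem_Ioo, h1, h2, abs_sub_lt_iff]
    constructor
    · rintro ⟨ha, hb⟩; constructor <;> linarith
    · rintro ⟨ha, hb⟩; constructor <;> linarith
  have hfune : ∀ x : Fin d → ℝ,
      (fun t => (S.indicator fun p => g p ^ 2) (Phi d (x, t)))
        = (Ioo (h (WithLp.toLp 2 x) - q) (h (WithLp.toLp 2 x) + q)).indicator (fun t => g (Phi d (x, t)) ^ 2) := by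
    intro x; funext t
    by_cases ht : Phi d (x, t) ∈ S
    · rw [Set.indicator_of_mem ht, Set.indicator_of_mem ((hSmem x t).1 ht)]
    · rw [Set.indicator_of_notMem ht,
        Set.indicator_of_notMem (fun hc => ht ((hSmem x t).2 hc))]
  -- a.e. slice facts
  have hae2 : ∀ᵐ x : Fin d → ℝ, Integrable (fun t => g (Phi d (x, t)) ^ 2) volume :=
    hcomp2.prod_right_ae
  have haeF' : ∀ᵐ x : Fin d → ℝ,
      Integrable (fun t => |g (Phi d (x, t))| * ‖fderiv ℝ g (Phi d (x, t))‖) volume :=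
    hcompF'.prod_right_ae
  have hptx : ∀ᵐ x : Fin d → ℝ,
      (∫ t, (S.indicator fun p => g p ^ 2) (Phi d (x, t)))
        ≤ 2 * q * ∫ t, |g (Phi d (x, t))| * ‖fderiv ℝ g (Phi d (x, t))‖ := by
    filter_upwards [hae2, haeF'] with x hx2 hxF'
    have hrw : (∫ t, (S.indicator fun p => g p ^ 2) (Phi d (x, t)))
        = ∫ t in Ioo (h (WithLp.toLp 2 x) - q) (h (WithLp.toLp 2 x) + q), g (Phi d (x, t)) ^ 2 := by
      rw [hfune x, integral_indicator measurableSet_Ioo]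
    rw [hrw]
    exact aux_lineBound (fun t => g (Phi d (x, t)))
      (fun t => fderiv ℝ g (Phi d (x, t)) v)
      (fun t => ‖fderiv ℝ g (Phi d (x, t))‖)
      (fun t => by
        simpa [Function.comp_def] using
          (hgdiff (Phi d (x, t))).hasFDerivAt.comp_hasDerivAt t (hline x t))
      (fun t => by
        simpa [Real.norm_eq_abs, hvnorm] using (fderiv ℝ g (Phi d (x, t))).le_opNorm v)
      hx2 hxF' (h (WithLp.toLp 2 x)) q hq0.le
  -- integrate in x
  have hmono : (∫ z, (S.indicator fun p => g p ^ 2) (Phi d z)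
      ∂((volume : Measure (Fin d → ℝ)).prod volume))
      ≤ 2 * q * ∫ z, |g (Phi d z)| * ‖fderiv ℝ g (Phi d z)‖
        ∂((volume : Measure (Fin d → ℝ)).prod volume) := by
    rw [integral_prod _ hcompF, integral_prod _ hcompF', ← integral_const_mul]
    exact integral_mono_ae hcompF.integral_prod_left
      (hcompF'.integral_prod_left.const_mul _) hptx
  have hC1 : (∫ p in S, g p ^ 2)
      = ∫ z, (S.indicator fun p => g p ^ 2) (Phi d z)
        ∂((volume : Measure (Fin d → ℝ)).prod volume) := by
    rw [← integral_indicator hSmeas, ← hPhi.integral_comp hemb]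
  have hC2 : (∫ z, |g (Phi d z)| * ‖fderiv ℝ g (Phi d z)‖
      ∂((volume : Measure (Fin d → ℝ)).prod volume))
      = ∫ p, |g p| * ‖fderiv ℝ g p‖ :=
    hPhi.integral_comp hemb (fun p => |g p| * ‖fderiv ℝ g p‖)
  have stepC : (∫ p in S, g p ^ 2) ≤ 2 * q * ∫ p, |g p| * ‖fderiv ℝ g p‖ := by
    rw [hC1, ← hC2]; exact hmono
  -- step D : Cauchy-Schwarz
  have hconj : Real.HolderConjugate 2 2 := Real.HolderConjugate.two_two
  have hof2 : ENNReal.ofReal (2 : ℝ) = 2 := by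
    rw [ENNReal.ofReal_ofNat]
  have hD := integral_mul_le_Lp_mul_Lq_of_nonneg (μ := volume) hconj
    (f := fun p => |g p|) (g := fun p => ‖fderiv ℝ g p‖)
    (Filter.Eventually.of_forall fun p => abs_nonneg _)
    (Filter.Eventually.of_forall fun p => norm_nonneg _)
    (by rw [hof2]; exact hgabs) (by rw [hof2]; exact hgd2)
  have e1 : (∫ p, |g p| ^ (2 : ℝ)) = ∫ p, g p ^ 2 := by
    refine integral_congr_ae (Filter.Eventually.of_forall fun p => ?_)
    show |g p| ^ (2 : ℝ) = g p ^ 2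
    rw [show (2 : ℝ) = ((2 : ℕ) : ℝ) by norm_num, Real.rpow_natCast, sq_abs]
  have e2 : (∫ p, ‖fderiv ℝ g p‖ ^ (2 : ℝ)) = ∫ p, ‖fderiv ℝ g p‖ ^ 2 := by
    refine integral_congr_ae (Filter.Eventually.of_forall fun p => ?_)
    show ‖fderiv ℝ g p‖ ^ (2 : ℝ) = ‖fderiv ℝ g p‖ ^ 2
    rw [show (2 : ℝ) = ((2 : ℕ) : ℝ) by norm_num, Real.rpow_natCast]
  have hDs : (∫ p, |g p| * ‖fderiv ℝ g p‖)
      ≤ Real.sqrt (∫ x, g x ^ 2) * Real.sqrt (∫ x, ‖fderiv ℝ g x‖ ^ 2) := by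
    rw [Real.sqrt_eq_rpow, Real.sqrt_eq_rpow, ← e1, ← e2]
    exact hD
  calc (∫ x in Metric.thickening δ _, (g x) ^ 2) ≤ ∫ p in S, g p ^ 2 := stepB
    _ ≤ 2 * q * ∫ p, |g p| * ‖fderiv ℝ g p‖ := stepC
    _ ≤ 2 * q * (Real.sqrt (∫ x, g x ^ 2) * Real.sqrt (∫ x, ‖fderiv ℝ g x‖ ^ 2)) := by
        exact mul_le_mul_of_nonneg_left hDs (by positivity)
    _ = 2 * N * δ * Real.sqrt (∫ x, g x ^ 2) * Real.sqrt (∫ x, ‖fderiv ℝ g x‖ ^ 2) := by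
        rw [hq]; ring

/-- The graph `E = {(x, h(x)) : x ∈ ℝ^{d-1}}` of a Lipschitz function `h` (with
Lipschitz constant `M`) is `H¹`-thin in `ℝ^d`; moreover, with `N = √(1+M²)`, one has
`∫_{E_δ} g² ≤ 2Nδ‖g‖_{L²}‖∇g‖_{L²}` for all `g ∈ H¹(ℝ^d)` and all `δ > 0`. -/
theorem stmt_14 (d : ℕ) (M : NNReal) (h : EuclideanSpace ℝ (Fin d) → ℝ)
    (hLip : LipschitzWith M h) :
    (∀ δ : ℝ, 0 < δ →
      ∀ g : EuclideanSpace ℝ (Fin (d + 1)) → ℝ, Differentiable ℝ g →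
        MemLp g 2 volume → MemLp (fun x => ‖fderiv ℝ g x‖) 2 volume →
        ∫ x in Metric.thickening δ
            {p : EuclideanSpace ℝ (Fin (d + 1)) |
              p (Fin.last d) = h (WithLp.toLp 2 (Fin.init (p : Fin (d + 1) → ℝ) : Fin d → ℝ) :
                EuclideanSpace ℝ (Fin d))}, (g x) ^ 2 ≤
          2 * Real.sqrt (1 + (M : ℝ) ^ 2) * δ * Real.sqrt (∫ x, (g x) ^ 2) *
            Real.sqrt (∫ x, ‖fderiv ℝ g x‖ ^ 2)) ∧
    (∃ C > (0 : ℝ), ∃ δ₀ > (0 : ℝ), ∀ δ ∈ Set.Ioo (0 : ℝ) δ₀,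
      ∀ g : EuclideanSpace ℝ (Fin (d + 1)) → ℝ, Differentiable ℝ g →
        MemLp g 2 volume → MemLp (fun x => ‖fderiv ℝ g x‖) 2 volume →
        ∫ x in Metric.thickening δ
            {p : EuclideanSpace ℝ (Fin (d + 1)) |
              p (Fin.last d) = h (WithLp.toLp 2 (Fin.init (p : Fin (d + 1) → ℝ) : Fin d → ℝ) :
                EuclideanSpace ℝ (Fin d))}, (g x) ^ 2 ≤
          (1 / 2) * (∫ x, (g x) ^ 2) + C * δ ^ 2 * ∫ x, ‖fderiv ℝ g x‖ ^ 2) := by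
  constructor
  · intro δ hδ g hgdiff hg2 hgd2
    exact aux_main d M h hLip δ hδ g hgdiff hg2 hgd2
  · refine ⟨2 * (1 + (M : ℝ) ^ 2), by positivity, 1, one_pos, ?_⟩
    intro δ hδ g hgdiff hg2 hgd2
    have h1 := aux_main d M h hLip δ hδ.1 g hgdiff hg2 hgd2
    set A := ∫ x, (g x) ^ 2 with hA
    set B := ∫ x, ‖fderiv ℝ g x‖ ^ 2 with hB
    have hA0 : 0 ≤ A := integral_nonneg fun x => sq_nonneg _
    have hB0 : 0 ≤ B := integral_nonneg fun x => sq_nonneg _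
    set N := Real.sqrt (1 + (M : ℝ) ^ 2) with hN
    have hsA : Real.sqrt A ^ 2 = A := Real.sq_sqrt hA0
    have hsB : Real.sqrt B ^ 2 = B := Real.sq_sqrt hB0
    have hsN : N ^ 2 = 1 + (M : ℝ) ^ 2 := Real.sq_sqrt (by positivity)
    have hsA0 : 0 ≤ Real.sqrt A := Real.sqrt_nonneg _
    have hsB0 : 0 ≤ Real.sqrt B := Real.sqrt_nonneg _
    have hsN0 : 0 ≤ N := Real.sqrt_nonneg _
    have hδ0 : 0 < δ := hδ.1
    refine h1.trans ?_
    have expand : (Real.sqrt A - 2 * N * δ * Real.sqrt B) ^ 2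
        = A - 4 * N * δ * Real.sqrt A * Real.sqrt B + 4 * (1 + (M : ℝ) ^ 2) * δ ^ 2 * B := by
      have hx : (Real.sqrt A - 2 * N * δ * Real.sqrt B) ^ 2
          = Real.sqrt A ^ 2 - 4 * N * δ * Real.sqrt A * Real.sqrt B
            + 4 * N ^ 2 * δ ^ 2 * Real.sqrt B ^ 2 := by ring
      rw [hx, hsA, hsB, hsN]
    have hsq := sq_nonneg (Real.sqrt A - 2 * N * δ * Real.sqrt B)
    linarith
end
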